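/- arXiv:1509.03584 — 6 statements merged into one kernel-verified Lean document; each statement's English description precedes it below -/
import Mathlib

section
/- Let Δ be a countable group with a measure-preserving action on a standard probability space (X,μ) such that for μ-a.e. x the orbit Δ·x is infinite (the orbit equivalence relation is aperiodic). Let Γ be a countable group of measure-preserving measurable bijections of X such that every γ ∈ Γ satisfies γ(x) ∈ Δ·x for μ-a.e. x, and such that Γ is dense in the full group of the Δ-orbit equivalence relation: for every measure-preserving measurable bijection T of X with T(x) ∈ Δ·x for μ-a.e. x and every ε > 0 there exists γ ∈ Γ with μ({x : T(x) ≠ γ(x)}) < ε. Then the Γ-action on X is totally non free: there is a conull measurable set X₀ ⊆ X on which the stabilizer map x ↦ {γ ∈ Γ : γ(x) = x} is injective. -/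
open MeasureTheory Set
open scoped ENNReal

section Aux

variable {X : Type*} [MeasurableSpace X] {Δ : Type*} [Group Δ] [MulAction Δ X]

open Classical in
/-- The function swapping `S` and `δ • S`, identity elsewhere. -/
noncomputable def swapFun (δ : Δ) (S : Set X) (x : X) : X :=
  if x ∈ S then δ • x else if δ⁻¹ • x ∈ S then δ⁻¹ • x else x

variable {δ : Δ} {S : Set X}

lemma swapFun_invol (hd : ∀ x ∈ S, δ • x ∉ S) (x : X) :
    swapFun δ S (swapFun δ S x) = x := by
  classical
  unfold swapFun
  by_cases h1 : x ∈ S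
  · have h2 : δ • x ∉ S := hd x h1
    have h3 : δ⁻¹ • (δ • x) ∈ S := by simpa using h1
    simp only [if_pos h1, if_neg h2, if_pos h3, inv_smul_smul]
  · by_cases h2 : δ⁻¹ • x ∈ S
    · simp only [if_neg h1, if_pos h2, smul_inv_smul]
    · simp only [if_neg h1, if_neg h2]

/-- The permutation swapping `S` and `δ • S`, identity elsewhere. -/
noncomputable def swapPerm (δ : Δ) (S : Set X) (hd : ∀ x ∈ S, δ • x ∉ S) : Equiv.Perm X :=
  ⟨swapFun δ S, swapFun δ S, swapFun_invol hd, swapFun_invol hd⟩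

variable {hd : ∀ x ∈ S, δ • x ∉ S}

lemma swapPerm_symm : (swapPerm δ S hd).symm = swapPerm δ S hd := rfl

lemma swapPerm_apply_of_mem {x : X} (h : x ∈ S) : swapPerm δ S hd x = δ • x := by
  classical
  show swapFun δ S x = δ • x
  rw [swapFun, if_pos h]

lemma swapPerm_apply_of_inv_mem {x : X} (h : δ⁻¹ • x ∈ S) :
    swapPerm δ S hd x = δ⁻¹ • x := by
  classical
  have h1 : x ∉ S := by
    intro hx
    exact hd _ h (by simpa using hx)
  show swapFun δ S x = δ⁻¹ • x
  rw [swapFun, if_neg h1, if_pos h]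

lemma swapPerm_apply_of_notMem {x : X} (h1 : x ∉ S) (h2 : δ⁻¹ • x ∉ S) :
    swapPerm δ S hd x = x := by
  classical
  show swapFun δ S x = x
  rw [swapFun, if_neg h1, if_neg h2]

lemma swapPerm_measurable (hS : MeasurableSet S)
    (h1 : Measurable (fun x : X => δ • x)) (h2 : Measurable (fun x : X => δ⁻¹ • x)) :
    Measurable (swapPerm δ S hd) := by
  classical
  show Measurable (swapFun δ S)
  unfold swapFun
  exact Measurable.ite hS h1 (Measurable.ite (h2 hS) h2 measurable_id)

lemma swapPerm_orbit (x : X) : swapPerm δ S hd x ∈ MulAction.orbit Δ x := by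
  classical
  show swapFun δ S x ∈ MulAction.orbit Δ x
  unfold swapFun
  split_ifs
  · exact ⟨δ, rfl⟩
  · exact ⟨δ⁻¹, rfl⟩
  · exact MulAction.mem_orbit_self x

lemma swapPerm_measurePreserving {μ : Measure X} (hS : MeasurableSet S)
    (hmp1 : MeasurePreserving (fun x : X => δ • x) μ μ)
    (hmp2 : MeasurePreserving (fun x : X => δ⁻¹ • x) μ μ) :
    MeasurePreserving (⇑(swapPerm δ S hd)) μ μ := by
  have hmeas : Measurable (swapPerm δ S hd) :=
    swapPerm_measurable hS hmp1.measurable hmp2.measurable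
  refine ⟨hmeas, ?_⟩
  refine Measure.ext fun E hE => ?_
  rw [Measure.map_apply hmeas hE]
  set D' : Set X := (fun x : X => δ⁻¹ • x) ⁻¹' S with hD'def
  have hD'm : MeasurableSet D' := hmp2.measurable hS
  have hSD' : ∀ x ∈ S, x ∉ D' := by
    intro x hx hx'
    exact hd _ hx' (by simpa using hx)
  have hsplit : (swapPerm δ S hd) ⁻¹' E =
      ((fun x : X => δ • x) ⁻¹' (D' ∩ E)) ∪
        (((fun x : X => δ⁻¹ • x) ⁻¹' (S ∩ E)) ∪ (E \ (S ∪ D'))) := by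
    ext x
    simp only [Set.mem_preimage, Set.mem_union, Set.mem_inter_iff, Set.mem_diff, hD'def]
    have e1 : δ⁻¹ • (δ • x) ∈ S ↔ x ∈ S := by simp
    by_cases h1 : x ∈ S
    · rw [swapPerm_apply_of_mem h1]
      have e2 : δ⁻¹ • x ∉ S := fun h => hSD' x h1 h
      tauto
    · by_cases h2 : δ⁻¹ • x ∈ S
      · rw [swapPerm_apply_of_inv_mem h2]
        tauto
      · rw [swapPerm_apply_of_notMem h1 h2]
        tauto
  rw [hsplit]
  have hU1 : ((fun x : X => δ • x) ⁻¹' (D' ∩ E)) ⊆ S := by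
    intro x hx
    have h := hx.1
    rw [hD'def, Set.mem_preimage] at h
    simpa using h
  have hU2 : ((fun x : X => δ⁻¹ • x) ⁻¹' (S ∩ E)) ⊆ D' := fun x hx => hx.1
  have hdisj0 : Disjoint S D' := Set.disjoint_left.mpr hSD'
  have hm1 : MeasurableSet ((fun x : X => δ • x) ⁻¹' (D' ∩ E)) :=
    hmp1.measurable (hD'm.inter hE)
  have hm2 : MeasurableSet ((fun x : X => δ⁻¹ • x) ⁻¹' (S ∩ E)) :=
    hmp2.measurable (hS.inter hE)
  have hm3 : MeasurableSet (E \ (S ∪ D')) := hE.diff (hS.union hD'm)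
  have hd12 : Disjoint ((fun x : X => δ • x) ⁻¹' (D' ∩ E))
      (((fun x : X => δ⁻¹ • x) ⁻¹' (S ∩ E)) ∪ (E \ (S ∪ D'))) := by
    refine Set.disjoint_left.mpr fun x hx hx' => ?_
    rcases hx' with h | h
    · exact Set.disjoint_left.mp hdisj0 (hU1 hx) (hU2 h)
    · exact h.2 (Or.inl (hU1 hx))
  have hd23 : Disjoint ((fun x : X => δ⁻¹ • x) ⁻¹' (S ∩ E)) (E \ (S ∪ D')) :=
    Set.disjoint_left.mpr fun x hx hx' => hx'.2 (Or.inr (hU2 hx))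
  rw [measure_union hd12 (hm2.union hm3), measure_union hd23 hm3,
    hmp1.measure_preimage (hD'm.inter hE).nullMeasurableSet,
    hmp2.measure_preimage (hS.inter hE).nullMeasurableSet]
  have : μ (D' ∩ E) + (μ (S ∩ E) + μ (E \ (S ∪ D'))) =
      (μ (E ∩ S) + μ (E ∩ D')) + μ (E \ (S ∪ D')) := by
    rw [Set.inter_comm D' E, Set.inter_comm S E]; ring
  rw [this]
  have hsplitE : μ (E ∩ S) + μ (E ∩ D') = μ (E ∩ (S ∪ D')) := by
    rw [Set.inter_union_distrib_left]
    exact (measure_union (hdisj0.mono Set.inter_subset_right Set.inter_subset_right)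
      (hE.inter hD'm)).symm
  rw [hsplitE, measure_inter_add_diff E (hS.union hD'm)]

end Aux

lemma infinite_novel {α : Type*} {h : ℕ → α} (hinf : (Set.range h).Infinite) :
    {n | ∀ m < n, h m ≠ h n}.Infinite := by
  by_contra hfin
  rw [Set.not_infinite] at hfin
  obtain ⟨N, hN⟩ := hfin.bddAbove
  apply hinf
  have key : ∀ n, h n ∈ h '' Set.Iic N := by
    intro n
    induction n using Nat.strong_induction_on with
    | _ n ih =>
      by_cases hn : ∀ m < n, h m ≠ h n
      · exact ⟨n, hN hn, rfl⟩
      · push_neg at hn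
        obtain ⟨m, hm, he⟩ := hn
        rw [← he]
        exact ih m hm
  exact ((Set.finite_Iic N).image h).subset (by rintro _ ⟨n, rfl⟩; exact key n)



/-- If `Δ` has a measure-preserving action on a standard probability space
`(X, μ)` with a.e. infinite orbits, and `G` is a countable group of measure-preserving
measurable bijections of `X` lying a.e. in the `Δ`-orbits and dense in the full group of the
`Δ`-orbit equivalence relation, then the `G`-action is totally non free: the stabilizer map is
injective on a conull measurable set. -/
theorem dense_subgroup_totally_non_free
    {X : Type*} [MeasurableSpace X] [StandardBorelSpace X]
    (μ : Measure X) [IsProbabilityMeasure μ]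
    {Δ : Type*} [Group Δ] [Countable Δ] [MulAction Δ X]
    (hmp : ∀ δ : Δ, MeasurePreserving (fun x : X => δ • x) μ μ)
    (haper : ∀ᵐ x ∂μ, (MulAction.orbit Δ x).Infinite)
    (G : Subgroup (Equiv.Perm X)) [Countable G]
    (hGmp : ∀ g ∈ G, Measurable ⇑g ∧ Measurable ⇑g.symm ∧ MeasurePreserving ⇑g μ μ)
    (hGorb : ∀ g ∈ G, ∀ᵐ x ∂μ, g x ∈ MulAction.orbit Δ x)
    (hdense : ∀ T : Equiv.Perm X, Measurable ⇑T → Measurable ⇑T.symm →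
      MeasurePreserving ⇑T μ μ → (∀ᵐ x ∂μ, T x ∈ MulAction.orbit Δ x) →
      ∀ ε : ℝ≥0∞, 0 < ε → ∃ g ∈ G, μ {x : X | T x ≠ g x} < ε) :
    ∃ X₀ : Set X, MeasurableSet X₀ ∧ μ X₀ᶜ = 0 ∧
      ∀ x ∈ X₀, ∀ x' ∈ X₀,
        {g : Equiv.Perm X | g ∈ G ∧ g x = x} = {g : Equiv.Perm X | g ∈ G ∧ g x' = x'} →
        x = x' := by
  classical
  letI := upgradeStandardBorel X
  obtain ⟨δe, hδe⟩ := exists_surjective_nat Δ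
  have hmeasδ : ∀ δ : Δ, Measurable (fun x : X => δ • x) := fun δ => (hmp δ).measurable
  -- measurability of equalizers
  have heqset : ∀ f g : X → X, Measurable f → Measurable g →
      MeasurableSet {x | f x = g x} := by
    intro f g hf hg
    have : {x | f x = g x} = (fun x => (f x, g x)) ⁻¹' (Set.diagonal X) := by
      ext x; simp [Set.mem_diagonal_iff]
    rw [this]
    exact (hf.prodMk hg) isClosed_diagonal.measurableSet
  -- a countable separating family of measurable sets
  obtain ⟨s, hsmeas, hssep⟩ :
      ∃ s : ℕ → Set X, (∀ m, MeasurableSet (s m)) ∧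
        ∀ x y : X, x ≠ y → ∃ m, x ∈ s m ∧ y ∉ s m := by
    set B0 : Set (Set X) := insert ∅ (TopologicalSpace.countableBasis X) with hB0def
    have hB0c : B0.Countable := (TopologicalSpace.countable_countableBasis X).insert ∅
    obtain ⟨s, hs⟩ := hB0c.exists_eq_range ⟨∅, Set.mem_insert _ _⟩
    refine ⟨s, ?_, ?_⟩
    · intro m
      have hmem : s m ∈ B0 := hs ▸ Set.mem_range_self m
      rcases Set.mem_insert_iff.mp hmem with h | h
      · rw [h]; exact MeasurableSet.empty
      · exact (TopologicalSpace.isOpen_of_mem_countableBasis h).measurableSet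
    · intro x y hxy
      obtain ⟨U, V, hU, hV, hxU, hyV, hUV⟩ := t2_separation hxy
      obtain ⟨b, hbB, hxb, hbU⟩ :=
        (TopologicalSpace.isBasis_countableBasis X).exists_subset_of_mem_open hxU hU
      have hmem : b ∈ Set.range s := by rw [← hs]; exact Set.mem_insert_of_mem _ hbB
      obtain ⟨m, hm⟩ := hmem
      refine ⟨m, hm.symm ▸ hxb, fun hy => ?_⟩
      rw [hm] at hy
      exact Set.disjoint_left.mp hUV (hbU hy) hyV
  -- the measurable null set of finite orbits
  set N0 : Set X := toMeasurable μ {x | ¬ (MulAction.orbit Δ x).Infinite} with hN0def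
  have hN0null : μ N0 = 0 := by
    rw [measure_toMeasurable]
    exact ae_iff.1 haper
  -- the sets of the construction
  set A : ℕ → Set X := fun m => (s m)ᶜ with hAdef
  set Sset : ℕ → ℕ → ℕ → Set X := fun m m' n =>
    A m ∩ ((fun x : X => δe n • x) ⁻¹' (A m)) ∩ {x | δe n • x = x}ᶜ ∩ s m' ∩
      ((fun x : X => δe n • x) ⁻¹' (s m'))ᶜ with hSdef
  have hSmem : ∀ m m' n x, x ∈ Sset m m' n ↔
      (x ∈ A m ∧ δe n • x ∈ A m ∧ δe n • x ≠ x ∧ x ∈ s m' ∧ δe n • x ∉ s m') := by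
    intro m m' n x
    simp only [hSdef, Set.mem_inter_iff, Set.mem_compl_iff, Set.mem_preimage,
      Set.mem_setOf_eq]
    tauto
  have hSsetm : ∀ m m' n, MeasurableSet (Sset m m' n) := by
    intro m m' n
    exact ((((hsmeas m).compl.inter ((hmeasδ (δe n)) (hsmeas m).compl)).inter
      (heqset _ _ (hmeasδ (δe n)) measurable_id).compl).inter (hsmeas m')).inter
      ((hmeasδ (δe n)) (hsmeas m')).compl
  have hd : ∀ m m' n, ∀ x ∈ Sset m m' n, δe n • x ∉ Sset m m' n := by
    intro m m' n x hx hx'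
    exact ((hSmem m m' n x).1 hx).2.2.2.2 ((hSmem m m' n (δe n • x)).1 hx').2.2.2.1
  set θ : ℕ → ℕ → ℕ → Equiv.Perm X := fun m m' n =>
    swapPerm (δe n) (Sset m m' n) (hd m m' n) with hθdef
  -- approximate each θ by elements of G
  have hg_ex : ∀ m m' n k, ∃ g ∈ G,
      μ {x | θ m m' n x ≠ g x} < (2 : ℝ≥0∞)⁻¹ ^ k := by
    intro m m' n k
    refine hdense _ (swapPerm_measurable (hSsetm m m' n) (hmeasδ (δe n)) (hmeasδ (δe n)⁻¹))
      ?_ (swapPerm_measurePreserving (hSsetm m m' n) (hmp (δe n)) (hmp (δe n)⁻¹))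
      (Filter.Eventually.of_forall fun x => swapPerm_orbit x) _
      (ENNReal.pow_pos (ENNReal.inv_pos.mpr ENNReal.ofNat_ne_top) k)
    rw [swapPerm_symm]
    exact swapPerm_measurable (hSsetm m m' n) (hmeasδ (δe n)) (hmeasδ (δe n)⁻¹)
  choose g hgG hgsmall using hg_ex
  -- Borel-Cantelli for the approximations
  have hbad1 : ∀ m m' n,
      μ {x | ∃ᶠ k in Filter.atTop, θ m m' n x ≠ g m m' n k x} = 0 := by
    intro m m' n
    apply measure_setOf_frequently_eq_zero
    have hle : ∀ k, μ {x | θ m m' n x ≠ g m m' n k x} ≤ (2 : ℝ≥0∞)⁻¹ ^ k :=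
      fun k => (hgsmall m m' n k).le
    refine ne_top_of_le_ne_top ?_ (ENNReal.tsum_le_tsum hle)
    rw [ENNReal.tsum_geometric]
    simp [ENNReal.one_sub_inv_two]
  -- the aperiodicity bad sets
  set Bad2 : ℕ → Set X := fun m =>
    A m ∩ N0ᶜ ∩ {x | ∀ δ : Δ, δ • x ∈ A m → δ • x = x} with hBad2def
  have hBad2mem : ∀ m x, x ∈ Bad2 m ↔
      (x ∈ A m ∧ x ∉ N0 ∧ ∀ δ : Δ, δ • x ∈ A m → δ • x = x) := by
    intro m x
    simp only [hBad2def, Set.mem_inter_iff, Set.mem_compl_iff, Set.mem_setOf_eq]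
    tauto
  have hbad2 : ∀ m, μ (Bad2 m) = 0 := by
    intro m
    have h2 : ∀ δ : Δ, MeasurableSet {x : X | δ • x ∈ A m → δ • x = x} := by
      intro δ
      have heq : {x : X | δ • x ∈ A m → δ • x = x} =
          ((fun x : X => δ • x) ⁻¹' (A m))ᶜ ∪ {x | δ • x = x} := by
        ext x; simp only [Set.mem_setOf_eq, Set.mem_union, Set.mem_compl_iff,
          Set.mem_preimage]; tauto
      rw [heq]
      exact ((hmeasδ δ) (hsmeas m).compl).compl.union
        (heqset _ _ (hmeasδ δ) measurable_id)
    have h3 : {x : X | ∀ δ : Δ, δ • x ∈ A m → δ • x = x} =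
        ⋂ δ : Δ, {x : X | δ • x ∈ A m → δ • x = x} := by
      ext x; simp
    have hBmeas : MeasurableSet (Bad2 m) :=
      ((hsmeas m).compl.inter (measurableSet_toMeasurable μ _).compl).inter
        (h3 ▸ MeasurableSet.iInter h2)
    -- the sets with a novel n-th orbit point
    set Bn : ℕ → Set X := fun n =>
      Bad2 m ∩ ⋂ j : ℕ, ⋂ _ : j < n, {x | δe j • x = δe n • x}ᶜ with hBndef
    have hBnmem : ∀ n x, x ∈ Bn n ↔ x ∈ Bad2 m ∧ ∀ j < n, δe j • x ≠ δe n • x := by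
      intro n x
      simp only [hBndef, Set.mem_inter_iff, Set.mem_iInter, Set.mem_compl_iff,
        Set.mem_setOf_eq]
    have hBnmeas : ∀ n, MeasurableSet (Bn n) := by
      intro n
      refine hBmeas.inter (MeasurableSet.iInter fun j => MeasurableSet.iInter fun _ => ?_)
      exact (heqset _ _ (hmeasδ (δe j)) (hmeasδ (δe n))).compl
    set Dn : ℕ → Set X := fun n => (fun x : X => (δe n)⁻¹ • x) ⁻¹' (Bn n) with hDndef
    have hDnmeas : ∀ n, MeasurableSet (Dn n) := fun n => (hmeasδ (δe n)⁻¹) (hBnmeas n)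
    have hDdisj : Pairwise (Function.onFun Disjoint Dn) := by
      intro n j hnj
      rw [Function.onFun, Set.disjoint_left]
      intro x hxn hxj
      rw [hDndef] at hxn hxj
      set a : X := (δe n)⁻¹ • x with hadef
      set b : X := (δe j)⁻¹ • x with hbdef
      have haB : a ∈ Bn n := hxn
      have hbB : b ∈ Bn j := hxj
      have hax : δe n • a = x := by rw [hadef, smul_inv_smul]
      have hbx : δe j • b = x := by rw [hbdef, smul_inv_smul]
      have hab : ((δe j)⁻¹ * δe n) • a = b := by
        rw [mul_smul, hax]
      have haB2 := ((hBnmem n a).1 haB).1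
      have hbB2 := ((hBnmem j b).1 hbB).1
      have hstable := ((hBad2mem m a).1 haB2).2.2
      have hba : b = a := by
        have hbA : b ∈ A m := ((hBad2mem m b).1 hbB2).1
        have := hstable ((δe j)⁻¹ * δe n) (by rw [hab]; exact hbA)
        rw [hab] at this
        exact this
      have heq2 : δe j • a = δe n • a := by
        rw [hax, ← hbx, hba]
      rcases lt_or_gt_of_ne hnj with h | h
      · exact ((hBnmem j b).1 hbB).2 n h (by rw [hba, heq2])
      · exact ((hBnmem n a).1 haB).2 j h heq2
    have hmeasBD : ∀ n, μ (Bn n) = μ (Dn n) := fun n =>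
      ((hmp (δe n)⁻¹).measure_preimage (hBnmeas n).nullMeasurableSet).symm
    have hsum : ∑' n, μ (Bn n) ≠ ∞ := by
      rw [tsum_congr hmeasBD, ← measure_iUnion hDdisj hDnmeas]
      exact measure_ne_top μ _
    have hfreq := measure_setOf_frequently_eq_zero (μ := μ)
      (p := fun n x => x ∈ Bn n) hsum
    refine measure_mono_null (fun x hxB => ?_) hfreq
    have hxN0 : x ∉ N0 := ((hBad2mem m x).1 hxB).2.1
    have hxinf : (MulAction.orbit Δ x).Infinite := by
      by_contra hc
      exact hxN0 (subset_toMeasurable _ _ hc)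
    have hrange : (Set.range fun n : ℕ => δe n • x).Infinite := by
      have horb : MulAction.orbit Δ x = Set.range fun n : ℕ => δe n • x := by
        ext y
        constructor
        · rintro ⟨δ, rfl⟩
          obtain ⟨n, rfl⟩ := hδe δ
          exact ⟨n, rfl⟩
        · rintro ⟨n, rfl⟩
          exact ⟨δe n, rfl⟩
      rwa [horb] at hxinf
    have hnov := infinite_novel hrange
    show ∃ᶠ n in Filter.atTop, x ∈ Bn n
    refine Filter.frequently_atTop.mpr fun N => ?_
    obtain ⟨n, hn_mem, hn_gt⟩ := hnov.exists_gt N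
    exact ⟨n, hn_gt.le, (hBnmem n x).2 ⟨hxB, hn_mem⟩⟩
  -- the global bad set
  set BAD : Set X := (N0 ∪ ⋃ m, Bad2 m) ∪
    ⋃ m, ⋃ m', ⋃ n, {x | ∃ᶠ k in Filter.atTop, θ m m' n x ≠ g m m' n k x} with hBADdef
  have hBADnull : μ BAD = 0 := by
    refine measure_union_null (measure_union_null hN0null ?_) ?_
    · exact measure_iUnion_null fun m => hbad2 m
    · exact measure_iUnion_null fun m => measure_iUnion_null fun m' =>
        measure_iUnion_null fun n => hbad1 m m' n
  refine ⟨(toMeasurable μ BAD)ᶜ, (measurableSet_toMeasurable μ BAD).compl, ?_, ?_⟩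
  · rw [compl_compl, measure_toMeasurable]; exact hBADnull
  · intro x hx x' hx' hstab
    have hsub : (toMeasurable μ BAD)ᶜ ⊆ BADᶜ :=
      Set.compl_subset_compl.mpr (subset_toMeasurable _ _)
    have key : ∀ u v : X, u ∉ BAD → v ∉ BAD →
        {g : Equiv.Perm X | g ∈ G ∧ g u = u} = {g : Equiv.Perm X | g ∈ G ∧ g v = v} →
        ∀ m, u ∈ s m → v ∈ s m := by
      intro u v hu hv hstabuv m hum
      by_contra hvm
      have hvA : v ∈ A m := hvm
      simp only [hBADdef, Set.mem_union, Set.mem_iUnion, not_or, not_exists] at hu hv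
      obtain ⟨⟨hvN0, hvBad2⟩, hvfreq⟩ := hv
      obtain ⟨⟨huN0, huBad2⟩, hufreq⟩ := hu
      have hex : ∃ δ : Δ, δ • v ∈ A m ∧ δ • v ≠ v := by
        by_contra hall
        push_neg at hall
        exact hvBad2 m ((hBad2mem m v).2 ⟨hvA, hvN0, fun δ h => hall δ h⟩)
      obtain ⟨δ, hδA, hδne⟩ := hex
      obtain ⟨n, rfl⟩ := hδe δ
      obtain ⟨m', hvm', hym'⟩ := hssep v (δe n • v) (Ne.symm hδne)
      have hvS : v ∈ Sset m m' n := (hSmem m m' n v).2 ⟨hvA, hδA, hδne, hvm', hym'⟩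
      have hmove : θ m m' n v = δe n • v := swapPerm_apply_of_mem hvS
      have hfix : θ m m' n u = u := by
        refine swapPerm_apply_of_notMem (fun huS => ?_) (fun huS => ?_)
        · exact ((hSmem m m' n u).1 huS).1 hum
        · have h := ((hSmem m m' n _).1 huS).2.1
          rw [smul_inv_smul] at h
          exact h hum
      have hu2 : ∀ᶠ k in Filter.atTop, θ m m' n u = g m m' n k u := by
        have h := hufreq m m' n
        rw [Set.mem_setOf_eq, Filter.not_frequently] at h
        simpa using h
      have hv2 : ∀ᶠ k in Filter.atTop, θ m m' n v = g m m' n k v := by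
        have h := hvfreq m m' n
        rw [Set.mem_setOf_eq, Filter.not_frequently] at h
        simpa using h
      obtain ⟨k, hku, hkv⟩ := (hu2.and hv2).exists
      have hgu : g m m' n k u = u := by rw [← hku, hfix]
      have hmem : g m m' n k ∈ {g : Equiv.Perm X | g ∈ G ∧ g u = u} :=
        ⟨hgG m m' n k, hgu⟩
      rw [hstabuv] at hmem
      have hgv : g m m' n k v = v := hmem.2
      rw [← hkv, hmove] at hgv
      exact hδne hgv
    by_contra hne
    obtain ⟨m, hxm, hx'm⟩ := hssep x x' hne
    exact hx'm (key x x' (hsub hx) (hsub hx') hstab m hxm)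
end

section
/- Let Δ be a countable group with a measure-preserving action on a standard probability space (X,μ). Let Γ be a countable group of measure-preserving measurable bijections of X such that every γ ∈ Γ satisfies γ(x) ∈ Δ·x for μ-a.e. x, and such that Γ is dense in the full group of the Δ-orbit equivalence relation: for every measure-preserving measurable bijection T of X with T(x) ∈ Δ·x for μ-a.e. x and every ε > 0 there exists γ ∈ Γ with μ({x : T(x) ≠ γ(x)}) < ε. Then Γ acts almost surely highly transitively on the Δ-orbits: for μ-a.e. x ∈ X, the orbit Δ·x is Γ-invariant and the Γ-action on Δ·x is highly transitive. -/
open MeasureTheory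
open scoped ENNReal

open Function Set

lemma aux_exists_perm_extend {α β : Type*} [Fintype β] [DecidableEq β]
    (u v : α → β) (hu : Function.Injective u) (hv : Function.Injective v) :
    ∃ σ : Equiv.Perm β, ∀ a, σ (u a) = v a := by
  classical
  have hcard : Fintype.card ↥(Set.range u)ᶜ = Fintype.card ↥(Set.range v)ᶜ := by
    rw [Fintype.card_compl_set, Fintype.card_compl_set,
      Fintype.card_congr ((Equiv.ofInjective u hu).symm.trans (Equiv.ofInjective v hv))]
  refine ⟨(Equiv.Set.sumCompl (Set.range u)).symm.trans
      ((Equiv.sumCongr ((Equiv.ofInjective u hu).symm.trans (Equiv.ofInjective v hv))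
        (Fintype.equivOfCardEq hcard)).trans (Equiv.Set.sumCompl (Set.range v))), fun a => ?_⟩
  have hmem : u a ∈ Set.range u := ⟨a, rfl⟩
  have h1 := Equiv.Set.sumCompl_symm_apply_of_mem hmem
  simp only [Equiv.trans_apply, h1, Equiv.sumCongr_apply, Sum.map_inl]
  have h2 : (Equiv.ofInjective u hu).symm ⟨u a, ⟨a, rfl⟩⟩ = a := by
    apply hu
    simp [Equiv.apply_ofInjective_symm hu]
  rw [h2]
  simp [Equiv.ofInjective_apply, Equiv.Set.sumCompl_apply_inl]

lemma aux_shrink_one {X : Type*} [MeasurableSpace X] [MeasurableSpace.CountablySeparated X]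
    (μ : Measure X) (f : X → X) (hf : Measurable f)
    (D : Set X) (hDm : MeasurableSet D) (hD : μ D ≠ 0)
    (hmv : ∀ x ∈ D, f x ≠ x) :
    ∃ C, C ⊆ D ∧ MeasurableSet C ∧ μ C ≠ 0 ∧ ∀ x ∈ C, f x ∉ C := by
  obtain ⟨S, hSm, hsep⟩ := exists_seq_separating X MeasurableSet.empty Set.univ
  set A : ℕ × Bool → Set X := fun p =>
    if p.2 then D ∩ S p.1 ∩ f ⁻¹' (S p.1)ᶜ else D ∩ (S p.1)ᶜ ∩ f ⁻¹' (S p.1) with hA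
  have hcover : D ⊆ ⋃ p, A p := by
    intro x hx
    have hne : ¬ ∀ n, f x ∈ S n ↔ x ∈ S n := fun h =>
      hmv x hx (hsep (f x) trivial x trivial h)
    push_neg at hne
    obtain ⟨n, hn⟩ := hne
    rcases hn with ⟨hfx, hxS⟩ | ⟨hfx, hxS⟩
    · exact Set.mem_iUnion.2 ⟨(n, false), by simp [hA, hx, hxS, hfx]⟩
    · exact Set.mem_iUnion.2 ⟨(n, true), by simp [hA, hx, hxS, hfx]⟩
  have : ∃ p, μ (A p) ≠ 0 := by
    by_contra h
    push_neg at h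
    exact hD (le_antisymm (le_trans (measure_mono hcover)
      (le_of_eq (measure_iUnion_null_iff.2 h))) zero_le)
  obtain ⟨⟨n, b⟩, hp⟩ := this
  cases b
  · refine ⟨D ∩ (S n)ᶜ ∩ f ⁻¹' (S n), fun x hx => hx.1.1, ?_, hp, ?_⟩
    · exact (hDm.inter (hSm n).compl).inter (hf (hSm n))
    · intro x hx hfx
      exact hfx.1.2 hx.2
  · refine ⟨D ∩ S n ∩ f ⁻¹' (S n)ᶜ, fun x hx => hx.1.1, ?_, hp, ?_⟩
    · exact (hDm.inter (hSm n)).inter (hf (hSm n).compl)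
    · intro x hx hfx
      exact hx.2 hfx.1.2

lemma aux_shrink {X : Type*} [MeasurableSpace X] [MeasurableSpace.CountablySeparated X]
    (μ : Measure X) (L : List (X → X)) (hLm : ∀ f ∈ L, Measurable f)
    (D : Set X) (hDm : MeasurableSet D) (hD : μ D ≠ 0)
    (hmv : ∀ f ∈ L, ∀ x ∈ D, f x ≠ x) :
    ∃ C, C ⊆ D ∧ MeasurableSet C ∧ μ C ≠ 0 ∧ ∀ f ∈ L, ∀ x ∈ C, f x ∉ C := by
  induction L generalizing D with
  | nil => exact ⟨D, subset_rfl, hDm, hD, by simp⟩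
  | cons f L ih =>
    obtain ⟨C₁, hC₁D, hC₁m, hC₁, hC₁p⟩ := ih (fun g hg => hLm g (List.mem_cons_of_mem _ hg))
      D hDm hD (fun g hg => hmv g (List.mem_cons_of_mem _ hg))
    obtain ⟨C, hCD, hCm, hC, hCp⟩ := aux_shrink_one μ f (hLm f List.mem_cons_self)
      C₁ hC₁m hC₁ (fun x hx => hmv f List.mem_cons_self x (hC₁D hx))
    refine ⟨C, hCD.trans hC₁D, hCm, hC, ?_⟩
    intro g hg x hx hgx
    rcases List.mem_cons.1 hg with rfl | hg
    · exact hCp x hx hgx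
    · exact hC₁p g hg x (hCD hx) (hCD hgx)

lemma aux_exists_T {X : Type*} [MeasurableSpace X] {Δ : Type*} [Group Δ] [MulAction Δ X]
    (μ : Measure X) (hmp : ∀ δ : Δ, MeasurePreserving (fun x : X => δ • x) μ μ)
    {κ : Type*} [Fintype κ] (ζ : κ → Δ) (σ : Equiv.Perm κ)
    (C : Set X) (hCm : MeasurableSet C)
    (hdisj : ∀ k l : κ, k ≠ l → ∀ x ∈ C, ∀ y ∈ C, ζ k • x ≠ ζ l • y) :
    ∃ T : Equiv.Perm X, Measurable ⇑T ∧ Measurable ⇑T.symm ∧ MeasurePreserving ⇑T μ μ ∧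
      (∀ z, T z ∈ MulAction.orbit Δ z) ∧ (∀ k, ∀ x ∈ C, T (ζ k • x) = ζ (σ k) • x) := by
  classical
  set B : κ → Set X := fun k => (fun x => ζ k • x) '' C with hB
  have hBmem : ∀ (k) (z), z ∈ B k ↔ (ζ k)⁻¹ • z ∈ C := by
    intro k z
    constructor
    · rintro ⟨x, hx, rfl⟩; simpa using hx
    · intro h; exact ⟨(ζ k)⁻¹ • z, h, by simp⟩
  have hBm : ∀ k, MeasurableSet (B k) := by
    intro k
    have : B k = (fun z => (ζ k)⁻¹ • z) ⁻¹' C := Set.ext fun z => hBmem k z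
    rw [this]
    exact (hmp ((ζ k)⁻¹)).measurable hCm
  have hBd : ∀ k l : κ, k ≠ l → ∀ z, z ∈ B k → z ∈ B l → False := by
    rintro k l hkl z ⟨x, hx, rfl⟩ ⟨y, hy, he⟩
    exact hdisj k l hkl x hx y hy he.symm
  set R : Set X := ⋃ k, B k with hR
  have hRm : MeasurableSet R := MeasurableSet.iUnion hBm
  set F : Equiv.Perm κ → X → X := fun τ z =>
    if h : ∃ k, z ∈ B k then (ζ (τ h.choose) * (ζ h.choose)⁻¹) • z else z with hF
  have hFkey : ∀ (τ : Equiv.Perm κ) (k) (x), x ∈ C → F τ (ζ k • x) = ζ (τ k) • x := by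
    intro τ k x hx
    have hz : ∃ k', ζ k • x ∈ B k' := ⟨k, ⟨x, hx, rfl⟩⟩
    have hch : hz.choose = k := by
      by_contra hne
      exact hBd _ _ hne _ hz.choose_spec ⟨x, hx, rfl⟩
    rw [hF]
    simp only
    rw [dif_pos hz, hch, mul_smul, inv_smul_smul]
  have hFout : ∀ (τ : Equiv.Perm κ) (z), z ∉ R → F τ z = z := by
    intro τ z hz
    rw [hF]
    simp only
    rw [dif_neg]
    rintro ⟨k, hk⟩
    exact hz (Set.mem_iUnion.2 ⟨k, hk⟩)
  have hFinv : ∀ (τ : Equiv.Perm κ) (z), F τ⁻¹ (F τ z) = z := by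
    intro τ z
    by_cases h : ∃ k, z ∈ B k
    · obtain ⟨k, x, hx, rfl⟩ := h
      rw [hFkey τ k x hx, hFkey τ⁻¹ (τ k) x hx, ← Equiv.Perm.mul_apply, inv_mul_cancel, Equiv.Perm.one_apply]
    · have hz : z ∉ R := by
        intro hzR
        exact h (Set.mem_iUnion.1 hzR)
      rw [hFout τ z hz, hFout τ⁻¹ z hz]
  have hpre : ∀ (τ : Equiv.Perm κ) (E : Set X),
      (F τ) ⁻¹' E = (E \ R) ∪ ⋃ k, (B k ∩ (fun z => (ζ (τ k) * (ζ k)⁻¹) • z) ⁻¹' E) := by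
    intro τ E
    ext z
    by_cases h : ∃ k, z ∈ B k
    · obtain ⟨k, x, hx, rfl⟩ := h
      have hzR : (ζ k • x) ∈ R := Set.mem_iUnion.2 ⟨k, ⟨x, hx, rfl⟩⟩
      simp only [Set.mem_preimage, Set.mem_union, Set.mem_diff, Set.mem_iUnion, Set.mem_inter_iff]
      rw [hFkey τ k x hx]
      constructor
      · intro hE
        exact Or.inr ⟨k, ⟨x, hx, rfl⟩, by rwa [mul_smul, inv_smul_smul]⟩
      · rintro (⟨_, hnR⟩ | ⟨l, hl, hlE⟩)
        · exact absurd hzR hnR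
        · have : l = k := by
            by_contra hne
            exact hBd l k hne _ hl ⟨x, hx, rfl⟩
          subst this
          rwa [mul_smul, inv_smul_smul] at hlE
    · have hzR : z ∉ R := fun hzR => h (Set.mem_iUnion.1 hzR)
      simp only [Set.mem_preimage, Set.mem_union, Set.mem_diff, Set.mem_iUnion, Set.mem_inter_iff]
      rw [hFout τ z hzR]
      constructor
      · intro hE
        exact Or.inl ⟨hE, hzR⟩
      · rintro (⟨hE, _⟩ | ⟨l, hl, _⟩)
        · exact hE
        · exact absurd hl (fun hl => h ⟨l, hl⟩)
  have hFm : ∀ τ : Equiv.Perm κ, Measurable (F τ) := by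
    intro τ E hE
    rw [hpre]
    exact (hE.diff hRm).union (MeasurableSet.iUnion fun k =>
      (hBm k).inter ((hmp _).measurable hE))
  have hmeas : ∀ (τ : Equiv.Perm κ) (E : Set X), MeasurableSet E → μ ((F τ) ⁻¹' E) = μ E := by
    intro τ E hE
    rw [hpre]
    have hdisj2 : Disjoint (E \ R) (⋃ k, (B k ∩ (fun z => (ζ (τ k) * (ζ k)⁻¹) • z) ⁻¹' E)) := by
      rw [Set.disjoint_left]
      rintro z ⟨_, hzR⟩ hz
      obtain ⟨k, hk⟩ := Set.mem_iUnion.1 hz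
      exact hzR (Set.mem_iUnion.2 ⟨k, hk.1⟩)
    rw [measure_union hdisj2 (MeasurableSet.iUnion fun k =>
      (hBm k).inter ((hmp _).measurable hE))]
    have hpair : Pairwise (Function.onFun Disjoint
        fun k => B k ∩ (fun z => (ζ (τ k) * (ζ k)⁻¹) • z) ⁻¹' E) := by
      intro k l hkl
      rw [Function.onFun, Set.disjoint_left]
      rintro z ⟨hzk, _⟩ ⟨hzl, _⟩
      exact hBd k l hkl z hzk hzl
    rw [measure_iUnion hpair (fun k => (hBm k).inter ((hmp _).measurable hE))]
    have hterm : ∀ k, μ (B k ∩ (fun z => (ζ (τ k) * (ζ k)⁻¹) • z) ⁻¹' E)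
        = μ (B (τ k) ∩ E) := by
      intro k
      have hseteq : B k ∩ (fun z => (ζ (τ k) * (ζ k)⁻¹) • z) ⁻¹' E
          = (fun z => (ζ (τ k) * (ζ k)⁻¹) • z) ⁻¹' (B (τ k) ∩ E) := by
        ext z
        simp only [Set.mem_inter_iff, Set.mem_preimage]
        constructor
        · rintro ⟨hzk, hzE⟩
          refine ⟨?_, hzE⟩
          rw [hBmem] at hzk ⊢
          rw [mul_smul]
          simpa using hzk
        · rintro ⟨hzk, hzE⟩
          refine ⟨?_, hzE⟩
          rw [hBmem] at hzk ⊢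
          rw [mul_smul] at hzk
          simpa using hzk
      rw [hseteq, (hmp _).measure_preimage ((hBm (τ k)).inter hE).nullMeasurableSet]
    calc μ (E \ R) + ∑' k, μ (B k ∩ (fun z => (ζ (τ k) * (ζ k)⁻¹) • z) ⁻¹' E)
        = μ (E \ R) + ∑' k, μ (B (τ k) ∩ E) := by
          congr 1
          exact tsum_congr hterm
      _ = μ (E \ R) + ∑' k, μ (B k ∩ E) := by
          congr 1
          rw [tsum_fintype, tsum_fintype]
          exact Equiv.sum_comp τ (fun k => μ (B k ∩ E))
      _ = μ (E \ R) + μ (⋃ k, B k ∩ E) := by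
          congr 1
          rw [measure_iUnion (fun k l hkl => by
            rw [Function.onFun, Set.disjoint_left]
            rintro z ⟨hzk, _⟩ ⟨hzl, _⟩
            exact hBd k l hkl z hzk hzl) (fun k => (hBm k).inter hE)]
      _ = μ (E \ R) + μ (E ∩ R) := by
          congr 1
          rw [← Set.iUnion_inter, Set.inter_comm]
      _ = μ E := measure_diff_add_inter E hRm
  have horb : ∀ (τ : Equiv.Perm κ) (z), F τ z ∈ MulAction.orbit Δ z := by
    intro τ z
    by_cases h : ∃ k, z ∈ B k
    · rw [hF]
      simp only
      rw [dif_pos h]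
      exact MulAction.mem_orbit z _
    · rw [hFout τ z (fun hzR => h (Set.mem_iUnion.1 hzR))]
      exact MulAction.mem_orbit_self z
  refine ⟨⟨F σ, F σ⁻¹, hFinv σ, fun z => by simpa using hFinv σ⁻¹ z⟩,
    hFm σ, hFm σ⁻¹, ⟨hFm σ, ?_⟩, horb σ, fun k x hx => hFkey σ k x hx⟩
  apply Measure.ext
  intro E hE
  simp only [Equiv.coe_fn_mk]
  rw [Measure.map_apply (hFm σ) hE, hmeas σ E hE]

lemma aux_key {X : Type*} [MeasurableSpace X] [StandardBorelSpace X]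
    (μ : Measure X) [IsProbabilityMeasure μ]
    {Δ : Type*} [Group Δ] [Countable Δ] [MulAction Δ X]
    (hmp : ∀ δ : Δ, MeasurePreserving (fun x : X => δ • x) μ μ)
    (G : Subgroup (Equiv.Perm X)) [Countable G]
    (hGmp : ∀ g ∈ G, Measurable ⇑g ∧ Measurable ⇑g.symm ∧ MeasurePreserving ⇑g μ μ)
    (hdense : ∀ T : Equiv.Perm X, Measurable ⇑T → Measurable ⇑T.symm →
      MeasurePreserving ⇑T μ μ → (∀ᵐ x ∂μ, T x ∈ MulAction.orbit Δ x) →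
      ∀ ε : ℝ≥0∞, 0 < ε → ∃ g ∈ G, μ {x : X | T x ≠ g x} < ε)
    (n : ℕ) (δ δ' : Fin n → Δ) :
    ∀ᵐ x ∂μ, (Function.Injective fun i => δ i • x) →
      (Function.Injective fun i => δ' i • x) →
      ∃ g ∈ G, ∀ i, (g : Equiv.Perm X) (δ i • x) = δ' i • x := by
  classical
  rcases Nat.eq_zero_or_pos n with rfl | hn
  · exact Filter.Eventually.of_forall fun x _ _ => ⟨1, one_mem G, fun i => i.elim0⟩
  haveI : Nonempty (Fin n) := Fin.pos_iff_nonempty.1 hn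
  letI := upgradeStandardBorel X
  haveI : MeasurableSpace.CountablySeparated X := by infer_instance
  have hsm : ∀ d : Δ, Measurable fun x : X => d • x := fun d => (hmp d).measurable
  have hEq : ∀ f g : X → X, Measurable f → Measurable g → MeasurableSet {x | f x = g x} :=
    fun f g hf hg => hf.stronglyMeasurable.measurableSet_eq_fun hg.stronglyMeasurable
  have hInjMeas : ∀ (ds : Fin n → Δ),
      MeasurableSet {x : X | Function.Injective fun i => ds i • x} := by
    intro ds
    have heq : {x : X | Function.Injective fun i => ds i • x}
        = ⋂ (i) (j), {x : X | ds i • x = ds j • x → i = j} := by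
      ext x
      simp only [Set.mem_setOf_eq, Set.mem_iInter]
      exact ⟨fun h i j hij => h hij, fun h a b hab => h a b hab⟩
    rw [heq]
    refine MeasurableSet.iInter fun i => MeasurableSet.iInter fun j => ?_
    by_cases hij : i = j
    · have h2 : {x : X | ds i • x = ds j • x → i = j} = Set.univ := by
        ext x; simp [hij]
      rw [h2]; exact MeasurableSet.univ
    · have h2 : {x : X | ds i • x = ds j • x → i = j} = {x : X | ds i • x = ds j • x}ᶜ := by
        ext x; simp [hij]
      rw [h2]
      exact (hEq _ _ (hsm (ds i)) (hsm (ds j))).compl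
  have hSolMeas : MeasurableSet {x : X | ∃ g ∈ G, ∀ i,
      (g : Equiv.Perm X) (δ i • x) = δ' i • x} := by
    have h2 : {x : X | ∃ g ∈ G, ∀ i, (g : Equiv.Perm X) (δ i • x) = δ' i • x}
        = ⋃ g : G, ⋂ i, {x : X | (g : Equiv.Perm X) (δ i • x) = δ' i • x} := by
      ext x
      simp only [Set.mem_setOf_eq, Set.mem_iUnion, Set.mem_iInter]
      constructor
      · rintro ⟨g, hg, h⟩; exact ⟨⟨g, hg⟩, h⟩
      · rintro ⟨⟨g, hg⟩, h⟩; exact ⟨g, hg, h⟩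
    rw [h2]
    exact MeasurableSet.iUnion fun g => MeasurableSet.iInter fun i =>
      hEq _ _ ((hGmp g g.2).1.comp (hsm (δ i))) (hsm (δ' i))
  rw [ae_iff]
  have hset : {x : X | ¬((Function.Injective fun i => δ i • x) →
      (Function.Injective fun i => δ' i • x) →
      ∃ g ∈ G, ∀ i, (g : Equiv.Perm X) (δ i • x) = δ' i • x)}
      = ({x : X | Function.Injective fun i => δ i • x}
          ∩ {x : X | Function.Injective fun i => δ' i • x})
        \ {x : X | ∃ g ∈ G, ∀ i, (g : Equiv.Perm X) (δ i • x) = δ' i • x} := by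
    ext x
    simp only [Set.mem_setOf_eq, Set.mem_diff, Set.mem_inter_iff, Classical.not_imp]
    tauto
  rw [hset]
  set AS : Set X := ({x : X | Function.Injective fun i => δ i • x}
      ∩ {x : X | Function.Injective fun i => δ' i • x})
    \ {x : X | ∃ g ∈ G, ∀ i, (g : Equiv.Perm X) (δ i • x) = δ' i • x} with hASdef
  by_contra hpos
  have hASm : MeasurableSet AS := ((hInjMeas δ).inter (hInjMeas δ')).diff hSolMeas
  -- patterns
  set Pat : (Fin n → Option (Fin n)) → Set X := fun c =>
    ⋂ j, (c j).elim (⋂ i, {x : X | δ' j • x = δ i • x}ᶜ)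
      (fun i₀ => {x : X | δ' j • x = δ i₀ • x}) with hPatdef
  have hPatm : ∀ c, MeasurableSet (Pat c) := by
    intro c
    refine MeasurableSet.iInter fun j => ?_
    rcases hcj : c j with _ | i₀
    · simp only [Option.elim_none]
      exact MeasurableSet.iInter fun i => (hEq _ _ (hsm (δ' j)) (hsm (δ i))).compl
    · simp only [Option.elim_some]
      exact hEq _ _ (hsm (δ' j)) (hsm (δ i₀))
  have hcover : AS ⊆ ⋃ c : Fin n → Option (Fin n), (AS ∩ Pat c) := by
    intro x hx
    have hchoice : ∀ j : Fin n, ∃ c' : Option (Fin n),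
        c'.elim (∀ i, δ' j • x ≠ δ i • x) (fun i₀ => δ' j • x = δ i₀ • x) := by
      intro j
      by_cases h : ∃ i, δ' j • x = δ i • x
      · exact ⟨some h.choose, h.choose_spec⟩
      · push_neg at h
        exact ⟨none, h⟩
    choose c hc using hchoice
    refine Set.mem_iUnion.2 ⟨c, hx, Set.mem_iInter.2 fun j => ?_⟩
    have hcj := hc j
    rcases hj : c j with _ | i₀
    · rw [hj, Option.elim_none] at hcj
      simp only [Option.elim_none]
      exact Set.mem_iInter.2 fun i => hcj i
    · rw [hj, Option.elim_some] at hcj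
      simp only [Option.elim_some]
      exact hcj
  have hex : ∃ c : Fin n → Option (Fin n), μ (AS ∩ Pat c) ≠ 0 := by
    by_contra h
    push_neg at h
    exact hpos (le_antisymm (le_trans (measure_mono hcover)
      (le_of_eq (measure_iUnion_null_iff.2 h))) zero_le)
  obtain ⟨c, hD0⟩ := hex
  set D : Set X := AS ∩ Pat c with hDdef
  have hDm : MeasurableSet D := hASm.inter (hPatm c)
  have hDprops : ∀ x ∈ D, (Function.Injective fun i => δ i • x)
      ∧ (Function.Injective fun i => δ' i • x)
      ∧ (¬∃ g ∈ G, ∀ i, (g : Equiv.Perm X) (δ i • x) = δ' i • x)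
      ∧ (∀ j i₀, c j = some i₀ → δ' j • x = δ i₀ • x)
      ∧ (∀ j, c j = none → ∀ i, δ' j • x ≠ δ i • x) := by
    rintro x ⟨⟨⟨h1, h2⟩, h3⟩, h4⟩
    refine ⟨h1, h2, h3, ?_, ?_⟩
    · intro j i₀ hj
      have h5 := Set.mem_iInter.1 h4 j
      rw [hj, Option.elim_some] at h5
      exact h5
    · intro j hj i
      have h5 := Set.mem_iInter.1 h4 j
      rw [hj, Option.elim_none] at h5
      exact Set.mem_iInter.1 h5 i
  obtain ⟨x₀, hx₀⟩ : D.Nonempty := nonempty_of_measure_ne_zero hD0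
  set ζ : Fin n ⊕ {j : Fin n // c j = none} → Δ := Sum.elim δ (fun j => δ' j.1) with hζdef
  have hζinj : ∀ x ∈ D, ∀ k l : Fin n ⊕ {j : Fin n // c j = none},
      ζ k • x = ζ l • x → k = l := by
    intro x hx k l h
    obtain ⟨h1, h2, h3, h4, h5⟩ := hDprops x hx
    rcases k with i | j <;> rcases l with i' | j'
    · exact congrArg Sum.inl (h1 h)
    · exact absurd h.symm (h5 j' j'.2 i)
    · exact absurd h (h5 j j.2 i')
    · exact congrArg Sum.inr (Subtype.ext (h2 h))
  set t : Fin n → Fin n ⊕ {j : Fin n // c j = none} := fun i =>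
    dite (c i = none) (fun h => Sum.inr ⟨i, h⟩)
      (fun h => Sum.inl ((c i).get (Option.ne_none_iff_isSome.mp h))) with htdef
  have hte : ∀ x ∈ D, ∀ i, ζ (t i) • x = δ' i • x := by
    intro x hx i
    obtain ⟨h1, h2, h3, h4, h5⟩ := hDprops x hx
    rcases hci : c i with _ | i₀
    · rw [htdef]
      simp only
      rw [dif_pos hci]
      rfl
    · have hne : ¬ (c i = none) := by simp [hci]
      rw [htdef]
      simp only
      rw [dif_neg hne]
      have hget : (c i).get (Option.ne_none_iff_isSome.mp hne) = i₀ := by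
        simp [hci]
      rw [hget]
      exact (h4 i i₀ hci).symm
  have htinj : Function.Injective t := by
    intro i i' h
    obtain ⟨h1, h2, h3, h4, h5⟩ := hDprops x₀ hx₀
    have h6 : ζ (t i) • x₀ = ζ (t i') • x₀ := by rw [h]
    rw [hte x₀ hx₀ i, hte x₀ hx₀ i'] at h6
    exact h2 h6
  obtain ⟨σ, hσ⟩ := aux_exists_perm_extend
    (Sum.inl : Fin n → Fin n ⊕ {j : Fin n // c j = none}) t Sum.inl_injective htinj
  set L : List (X → X) := ((Finset.univ :
      Finset ((Fin n ⊕ {j : Fin n // c j = none}) × (Fin n ⊕ {j : Fin n // c j = none}))).filter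
    (fun p => p.1 ≠ p.2)).toList.map (fun p => fun x : X => ((ζ p.1)⁻¹ * ζ p.2) • x) with hLdef
  have hLmem : ∀ (k l : Fin n ⊕ {j : Fin n // c j = none}), k ≠ l →
      (fun x : X => ((ζ k)⁻¹ * ζ l) • x) ∈ L := by
    intro k l hkl
    exact List.mem_map.2 ⟨(k, l),
      Finset.mem_toList.2 (Finset.mem_filter.2 ⟨Finset.mem_univ _, hkl⟩), rfl⟩
  have hLm : ∀ f ∈ L, Measurable f := by
    intro f hf
    obtain ⟨p, _, rfl⟩ := List.mem_map.1 hf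
    exact hsm _
  have hLmv : ∀ f ∈ L, ∀ x ∈ D, f x ≠ x := by
    intro f hf x hx
    obtain ⟨p, hp, rfl⟩ := List.mem_map.1 hf
    have hne : p.1 ≠ p.2 := (Finset.mem_filter.1 (Finset.mem_toList.1 hp)).2
    intro heq
    simp only [mul_smul, inv_smul_eq_iff] at heq
    exact hne (hζinj x hx p.2 p.1 heq).symm
  obtain ⟨C, hCD, hCm, hC0, hCsep⟩ := aux_shrink μ L hLm D hDm hD0 hLmv
  have hdisjC : ∀ k l : Fin n ⊕ {j : Fin n // c j = none}, k ≠ l →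
      ∀ x ∈ C, ∀ y ∈ C, ζ k • x ≠ ζ l • y := by
    intro k l hkl x hx y hy heq
    have hy' : ((ζ l)⁻¹ * ζ k) • x = y := by
      rw [mul_smul, heq, inv_smul_smul]
    exact hCsep _ (hLmem l k (Ne.symm hkl)) x hx (show ((ζ l)⁻¹ * ζ k) • x ∈ C from hy' ▸ hy)
  obtain ⟨T, hTm, hTm', hTmp, hTorb, hTkey⟩ := aux_exists_T μ hmp ζ σ C hCm hdisjC
  set ε : ℝ≥0∞ := μ C / ((n : ℝ≥0∞) + 1) with hεdef
  have hεpos : 0 < ε := ENNReal.div_pos hC0 (by simp [ENNReal.add_eq_top])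
  obtain ⟨g, hgG, hgT⟩ := hdense T hTm hTm' hTmp (Filter.Eventually.of_forall hTorb) ε hεpos
  have hgm : Measurable ⇑g := (hGmp g hgG).1
  have hne_meas : MeasurableSet {z : X | T z ≠ g z} := (hEq _ _ hTm hgm).compl
  set Bad : Set X := ⋃ i : Fin n, (fun x : X => δ i • x) ⁻¹' {z : X | T z ≠ g z} with hBaddef
  have hBadlt : μ Bad < μ C := by
    have h1 : μ Bad ≤ (n : ℝ≥0∞) * μ {z : X | T z ≠ g z} := by
      refine le_trans (measure_iUnion_fintype_le μ _) (le_of_eq ?_)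
      rw [Finset.sum_congr rfl
        (fun i _ => (hmp (δ i)).measure_preimage hne_meas.nullMeasurableSet)]
      rw [Finset.sum_const, Finset.card_univ, Fintype.card_fin, nsmul_eq_mul]
    have h3 : (n : ℝ≥0∞) * μ {z : X | T z ≠ g z} < (n : ℝ≥0∞) * ε :=
      (ENNReal.mul_lt_mul_iff_right (by exact_mod_cast hn.ne') (ENNReal.natCast_ne_top n)).2 hgT
    have h5 : (n : ℝ≥0∞) * ε ≤ ((n : ℝ≥0∞) + 1) * ε := mul_le_mul_left le_self_add ε
    have h6 : ((n : ℝ≥0∞) + 1) * ε = μ C := by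
      rw [hεdef]
      exact ENNReal.mul_div_cancel' (by simp) (by simp [ENNReal.add_eq_top])
    calc μ Bad ≤ (n : ℝ≥0∞) * μ {z : X | T z ≠ g z} := h1
      _ < (n : ℝ≥0∞) * ε := h3
      _ ≤ ((n : ℝ≥0∞) + 1) * ε := h5
      _ = μ C := h6
  obtain ⟨x, hxC, hxBad⟩ : ∃ x, x ∈ C ∧ x ∉ Bad := by
    by_contra h
    push_neg at h
    exact absurd (measure_mono (fun x hx => h x hx) : μ C ≤ μ Bad) (not_le.2 hBadlt)
  have hxD : x ∈ D := hCD hxC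
  obtain ⟨h1, h2, h3, h4, h5⟩ := hDprops x hxD
  apply h3
  refine ⟨g, hgG, fun i => ?_⟩
  have hTi : T (δ i • x) = δ' i • x := by
    have h7 := hTkey (Sum.inl i) x hxC
    rw [hσ i, hte x hxD i] at h7
    exact h7
  have h8 : T (δ i • x) = g (δ i • x) :=
    not_not.1 fun hne => hxBad (Set.mem_iUnion.2 ⟨i, hne⟩)
  rw [← h8]
  exact hTi

/-- If `Δ` has a measure-preserving action on a standard probability space
`(X, μ)` and `G` is a countable group of measure-preserving measurable bijections of `X` lying
a.e. in the `Δ`-orbits and dense in the full group of the `Δ`-orbit equivalence relation, then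
for a.e. `x` the orbit `Δ • x` is `G`-invariant and the `G`-action on it is highly
transitive. -/
theorem dense_subgroup_highly_transitive_on_orbits
    {X : Type*} [MeasurableSpace X] [StandardBorelSpace X]
    (μ : Measure X) [IsProbabilityMeasure μ]
    {Δ : Type*} [Group Δ] [Countable Δ] [MulAction Δ X]
    (hmp : ∀ δ : Δ, MeasurePreserving (fun x : X => δ • x) μ μ)
    (G : Subgroup (Equiv.Perm X)) [Countable G]
    (hGmp : ∀ g ∈ G, Measurable ⇑g ∧ Measurable ⇑g.symm ∧ MeasurePreserving ⇑g μ μ)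
    (hGorb : ∀ g ∈ G, ∀ᵐ x ∂μ, g x ∈ MulAction.orbit Δ x)
    (hdense : ∀ T : Equiv.Perm X, Measurable ⇑T → Measurable ⇑T.symm →
      MeasurePreserving ⇑T μ μ → (∀ᵐ x ∂μ, T x ∈ MulAction.orbit Δ x) →
      ∀ ε : ℝ≥0∞, 0 < ε → ∃ g ∈ G, μ {x : X | T x ≠ g x} < ε) :
    ∀ᵐ x ∂μ,
      (∀ g ∈ G, ∀ y ∈ MulAction.orbit Δ x, g y ∈ MulAction.orbit Δ x) ∧
      (∀ (n : ℕ) (y y' : Fin n → X),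
        (∀ i, y i ∈ MulAction.orbit Δ x) → (∀ i, y' i ∈ MulAction.orbit Δ x) →
        Function.Injective y → Function.Injective y' →
        ∃ g ∈ G, ∀ i, g (y i) = y' i) := by
  classical
  have hall1 : ∀ᵐ x ∂μ, ∀ (g : G) (d : Δ),
      (g : Equiv.Perm X) (d • x) ∈ MulAction.orbit Δ x := by
    rw [ae_all_iff]
    intro g
    rw [ae_all_iff]
    intro d
    have h2 := (hmp d).quasiMeasurePreserving.ae (hGorb g g.2)
    filter_upwards [h2] with x hx
    rwa [MulAction.orbit_smul] at hx
  have hall2 : ∀ᵐ x ∂μ, ∀ p : (m : ℕ) × ((Fin m → Δ) × (Fin m → Δ)),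
      (Function.Injective fun i => p.2.1 i • x) →
      (Function.Injective fun i => p.2.2 i • x) →
      ∃ g ∈ G, ∀ i, (g : Equiv.Perm X) (p.2.1 i • x) = p.2.2 i • x :=
    ae_all_iff.2 fun p => aux_key μ hmp G hGmp hdense p.1 p.2.1 p.2.2
  filter_upwards [hall1, hall2] with x h1 h2
  constructor
  · intro g hg y hy
    obtain ⟨d, rfl⟩ := MulAction.mem_orbit_iff.1 hy
    exact h1 ⟨g, hg⟩ d
  · intro n y y' hy hy' hinj hinj'
    choose d hd using fun i => MulAction.mem_orbit_iff.1 (hy i)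
    choose d' hd' using fun i => MulAction.mem_orbit_iff.1 (hy' i)
    have hydd : (fun i => d i • x) = y := funext hd
    have hydd' : (fun i => d' i • x) = y' := funext hd'
    have hinj1 : Function.Injective fun i => d i • x := by rw [hydd]; exact hinj
    have hinj2 : Function.Injective fun i => d' i • x := by rw [hydd']; exact hinj'
    obtain ⟨g, hg, hgi⟩ := h2 ⟨n, d, d'⟩ hinj1 hinj2
    exact ⟨g, hg, fun i => by rw [← hd i, ← hd' i]; exact hgi i⟩
end

section
/- Let Γ be a countable group with a measure-preserving action on a standard probability space (X,μ). Assume that for every finite subset F ⊆ Γ∖{1}, the set {x ∈ X : f·x ≠ x for all f ∈ F} has positive measure. Then for every finite subset F ⊆ Γ there exists a measurable set A ⊆ X with μ(A) > 0 such that the sets f·A (f ∈ F) are pairwise disjoint. -/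
open MeasureTheory Pointwise

/-- For a measure-preserving action of a countable group `Γ` on a standard
probability space `(X, μ)`, if for every finite `F ⊆ Γ \ {1}` the set of points moved by all
elements of `F` has positive measure, then for every finite `F ⊆ Γ` there is a positive-measure
measurable set `A` whose translates `f • A`, `f ∈ F`, are pairwise disjoint. -/
theorem exists_posMeasure_set_with_disjoint_translates
    {X : Type*} [MeasurableSpace X] [StandardBorelSpace X]
    (μ : Measure X) [IsProbabilityMeasure μ]
    {Γ : Type*} [Group Γ] [Countable Γ] [MulAction Γ X]
    (hmp : ∀ γ : Γ, MeasurePreserving (fun x : X => γ • x) μ μ)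
    (hfaith : ∀ F : Finset Γ, (1 : Γ) ∉ F → 0 < μ {x : X | ∀ f ∈ F, f • x ≠ x}) :
    ∀ F : Finset Γ, ∃ A : Set X, MeasurableSet A ∧ 0 < μ A ∧
      ∀ f ∈ F, ∀ f' ∈ F, f ≠ f' → Disjoint (f • A) (f' • A) := by
  intro F
  classical
  obtain ⟨e, he⟩ := MeasureTheory.exists_measurableEmbedding_real X
  set F' : Finset Γ := ((F ×ˢ F).image fun p => p.1⁻¹ * p.2).erase 1 with hF'def
  have h1 : (1 : Γ) ∉ F' := Finset.notMem_erase _ _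
  have hY := hfaith F' h1
  -- candidate sets
  set T : ℚ → Set X := fun q => e ⁻¹' (Set.Iio (q : ℝ)) with hTdef
  set C : Γ → ℚ × Bool → Set X := fun g p =>
    if p.2 then T p.1 ∩ (fun x => g • x) ⁻¹' (T p.1)ᶜ
    else (T p.1)ᶜ ∩ (fun x => g • x) ⁻¹' (T p.1) with hCdef
  set A : (F' → ℚ × Bool) → Set X := fun σ => ⋂ g : F', C g (σ g) with hAdef
  have hTmeas : ∀ q, MeasurableSet (T q) := fun q => he.measurable measurableSet_Iio
  have hCmeas : ∀ g p, MeasurableSet (C g p) := by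
    rintro g ⟨q, b⟩
    cases b
    · simpa [hCdef] using (hTmeas q).compl.inter ((hmp g).measurable (hTmeas q))
    · simpa [hCdef] using (hTmeas q).inter ((hmp g).measurable (hTmeas q).compl)
  have hAmeas : ∀ σ, MeasurableSet (A σ) :=
    fun σ => MeasurableSet.iInter fun g => hCmeas g (σ g)
  -- coverage of Y by the candidates
  have hcov : {x : X | ∀ f ∈ F', f • x ≠ x} ⊆ ⋃ σ, A σ := by
    intro x hx
    have hchoice : ∀ g : F', ∃ p : ℚ × Bool, x ∈ C g p := by
      rintro ⟨g, hg⟩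
      have hne : e ((g : Γ) • x) ≠ e x := fun h => hx g hg (he.injective h)
      rcases hne.lt_or_gt with h | h
      · -- e (g • x) < e x : pick (q, false)
        obtain ⟨q, hq1, hq2⟩ := exists_rat_btwn h
        refine ⟨(q, false), ?_⟩
        show x ∈ (T q)ᶜ ∩ (fun x => (g : Γ) • x) ⁻¹' (T q)
        exact ⟨not_lt.2 hq2.le, hq1⟩
      · -- e x < e (g • x) : pick (q, true)
        obtain ⟨q, hq1, hq2⟩ := exists_rat_btwn h
        refine ⟨(q, true), ?_⟩
        show x ∈ T q ∩ (fun x => (g : Γ) • x) ⁻¹' (T q)ᶜ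
        exact ⟨hq1, not_lt.2 hq2.le⟩
    choose σ hσ using hchoice
    exact Set.mem_iUnion.2 ⟨σ, Set.mem_iInter.2 hσ⟩
  -- one candidate has positive measure
  have hpos : ∃ σ, 0 < μ (A σ) := by
    by_contra h
    push_neg at h
    simp only [nonpos_iff_eq_zero] at h
    have : μ {x : X | ∀ f ∈ F', f • x ≠ x} = 0 :=
      measure_mono_null hcov (measure_iUnion_null h)
    exact hY.ne' this
  obtain ⟨σ, hσpos⟩ := hpos
  refine ⟨A σ, hAmeas σ, hσpos, ?_⟩
  intro f hf f' hf' hne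
  rw [Set.disjoint_left]
  rintro y hy hy'
  obtain ⟨a, ha, rfl⟩ := hy
  obtain ⟨a', ha', heq⟩ := hy'
  -- a = (f⁻¹ * f') • a'
  have hg : (f⁻¹ * f') ∈ F' := by
    refine Finset.mem_erase.2 ⟨?_, Finset.mem_image.2 ⟨(f, f'), Finset.mem_product.2 ⟨hf, hf'⟩, rfl⟩⟩
    intro hcontra
    exact hne (inv_mul_eq_one.mp hcontra)
  have ha'' : a = (f⁻¹ * f') • a' := by
    have := congrArg (fun z => f⁻¹ • z) heq
    simpa [smul_smul] using this.symm
  set g : Γ := f⁻¹ * f' with hgdef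
  have hmem : a ∈ C g (σ ⟨g, hg⟩) := Set.mem_iInter.1 ha ⟨g, hg⟩
  have hmem' : a' ∈ C g (σ ⟨g, hg⟩) := Set.mem_iInter.1 ha' ⟨g, hg⟩
  rcases hp : σ ⟨g, hg⟩ with ⟨q, b⟩
  rw [hp] at hmem hmem'
  cases b
  · have h2 : a ∈ (T q)ᶜ ∩ (fun x => g • x) ⁻¹' (T q) := hmem
    have h3 : a' ∈ (T q)ᶜ ∩ (fun x => g • x) ⁻¹' (T q) := hmem'
    rw [ha''] at h2
    exact h2.1 h3.2
  · have h2 : a ∈ T q ∩ (fun x => g • x) ⁻¹' (T q)ᶜ := hmem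
    have h3 : a' ∈ T q ∩ (fun x => g • x) ⁻¹' (T q)ᶜ := hmem'
    rw [ha''] at h2
    exact h3.2 h2.1
end

section
/- Let X = {0,1}^ℕ equipped with the product measure μ = ⊗_{n∈ℕ}(½δ_0 + ½δ_1). Let T be a measure-preserving measurable bijection of X such that for μ-a.e. x, T(x) agrees with x in all but finitely many coordinates. Then for every ε > 0 there exist n ∈ ℕ and a permutation σ of {0,1}^n such that μ({x ∈ X : T(x) ≠ σ̃(x)}) < ε, where σ̃ is the dyadic permutation of X induced by σ. -/
open MeasureTheory
open scoped ENNReal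

open scoped symmDiff

namespace DyadicAux

/-- Union of level-`m` cylinders given by the set of words `V`. -/
def cylSet (m : ℕ) (V : Set (Fin m → Bool)) : Set (ℕ → Bool) :=
  {x | (fun j : Fin m => x (j : ℕ)) ∈ V}

lemma measurable_word (m : ℕ) : Measurable fun x : ℕ → Bool => fun j : Fin m => x (j : ℕ) :=
  measurable_pi_lambda _ fun j => measurable_pi_apply _

lemma measurableSet_cylSet (m : ℕ) (V : Set (Fin m → Bool)) : MeasurableSet (cylSet m V) :=
  measurable_word m (V.to_countable.measurableSet)

lemma cylSet_singleton (m : ℕ) (u : Fin m → Bool) :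
    cylSet m {u} = {x | ∀ i : Fin m, x (i : ℕ) = u i} := by
  ext x
  simp [cylSet, funext_iff]

lemma cylSet_castLE {m m' : ℕ} (h : m ≤ m') (V : Set (Fin m → Bool)) :
    cylSet m V = cylSet m' {u | (fun j : Fin m => u (Fin.castLE h j)) ∈ V} := rfl

lemma cylSet_union (m : ℕ) (V W : Set (Fin m → Bool)) :
    cylSet m (V ∪ W) = cylSet m V ∪ cylSet m W := rfl

lemma cylSet_compl (m : ℕ) (V : Set (Fin m → Bool)) :
    cylSet m Vᶜ = (cylSet m V)ᶜ := rfl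

lemma cylSet_empty (m : ℕ) : cylSet m (∅ : Set (Fin m → Bool)) = ∅ := rfl

lemma isCyl_union {A B : Set (ℕ → Bool)}
    (hA : ∃ m V, A = cylSet m V) (hB : ∃ m V, B = cylSet m V) :
    ∃ m V, A ∪ B = cylSet m V := by
  obtain ⟨m, V, rfl⟩ := hA
  obtain ⟨m', V', rfl⟩ := hB
  exact ⟨max m m',
    {u | (fun j : Fin m => u (Fin.castLE (le_max_left m m') j)) ∈ V} ∪
      {u | (fun j : Fin m' => u (Fin.castLE (le_max_right m m') j)) ∈ V'},
    by rw [cylSet_castLE (le_max_left m m') V, cylSet_castLE (le_max_right m m') V',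
      ← cylSet_union]⟩

lemma isCyl_biUnion (k : ℕ) (g : ℕ → Set (ℕ → Bool))
    (hg : ∀ i, i < k → ∃ m V, g i = cylSet m V) :
    ∃ m V, (⋃ i, ⋃ _ : i < k, g i) = cylSet m V := by
  induction k with
  | zero => exact ⟨0, ∅, by simp [cylSet_empty]⟩
  | succ n ih =>
      rw [Set.biUnion_lt_succ]
      exact isCyl_union (ih fun i hi => hg i (hi.trans (Nat.lt_succ_self n)))
        (hg n (Nat.lt_succ_self n))

end DyadicAux

namespace DyadicAux

/-- The family of elementary cylinders. -/
def cylFamily : Set (Set (ℕ → Bool)) :=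
  {S | ∃ (n : ℕ) (s : Fin n → Bool), S = {x | ∀ i : Fin n, x (i : ℕ) = s i}}

lemma generateFrom_cylFamily :
    (inferInstance : MeasurableSpace (ℕ → Bool)) = .generateFrom cylFamily := by
  refine le_antisymm ?_ ?_
  · refine iSup_le fun i => ?_
    intro t ht
    obtain ⟨s, -, rfl⟩ := ht
    have h1 : ∀ b : Bool, MeasurableSet[.generateFrom cylFamily] {x : ℕ → Bool | x i = b} := by
      intro b
      have he : {x : ℕ → Bool | x i = b} =
          ⋃ t ∈ {t : Fin (i+1) → Bool | t ⟨i, Nat.lt_succ_self i⟩ = b},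
            {x : ℕ → Bool | ∀ j : Fin (i+1), x (j : ℕ) = t j} := by
        ext x
        simp only [Set.mem_setOf_eq, Set.mem_iUnion]
        constructor
        · intro hx
          exact ⟨fun j => x (j : ℕ), hx, fun j => rfl⟩
        · rintro ⟨t, htb, hxt⟩
          rw [← htb]; exact hxt ⟨i, Nat.lt_succ_self i⟩
      rw [he]
      exact .biUnion (Set.to_countable _)
        (fun t _ => .basic _ ⟨i+1, t, rfl⟩)
    have he2 : (fun x : ℕ → Bool => x i) ⁻¹' s = ⋃ b ∈ s, {x : ℕ → Bool | x i = b} := by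
      ext x; simp
    rw [he2]
    exact .biUnion (Set.to_countable _) fun b _ => h1 b
  · refine MeasurableSpace.generateFrom_le ?_
    rintro S ⟨n, s, rfl⟩
    rw [← cylSet_singleton]
    exact measurableSet_cylSet n {s}

lemma cyl_inter_of_le {n n' : ℕ} (h : n ≤ n') (a : Fin n → Bool) (b : Fin n' → Bool)
    (hne : ({x : ℕ → Bool | ∀ i : Fin n, x (i : ℕ) = a i} ∩
      {x | ∀ i : Fin n', x (i : ℕ) = b i}).Nonempty) :
    {x : ℕ → Bool | ∀ i : Fin n, x (i : ℕ) = a i} ∩ {x | ∀ i : Fin n', x (i : ℕ) = b i}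
      = {x | ∀ i : Fin n', x (i : ℕ) = b i} := by
  obtain ⟨x, hxa, hxb⟩ := hne
  refine Set.inter_eq_right.mpr fun y hy i => ?_
  have key : a i = b (Fin.castLE h i) := by
    rw [← hxa i, ← hxb (Fin.castLE h i)]
    rfl
  rw [key]
  exact hy (Fin.castLE h i)

lemma isPiSystem_cylFamily : IsPiSystem cylFamily := by
  rintro S ⟨n, a, rfl⟩ S' ⟨n', b, rfl⟩ hne
  rcases le_total n n' with h | h
  · exact ⟨n', b, cyl_inter_of_le h a b hne⟩
  · rw [Set.inter_comm] at hne ⊢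
    exact ⟨n, a, cyl_inter_of_le h b a hne⟩

theorem approx_cyl (μ : Measure (ℕ → Bool)) [IsFiniteMeasure μ]
    {S : Set (ℕ → Bool)} (hS : MeasurableSet S) :
    ∀ δ : ℝ≥0∞, 0 < δ → ∃ (m : ℕ) (V : Set (Fin m → Bool)), μ (S ∆ cylSet m V) < δ := by
  refine MeasurableSpace.induction_on_inter
    (C := fun S _ => ∀ δ : ℝ≥0∞, 0 < δ → ∃ m V, μ (S ∆ cylSet m V) < δ)
    generateFrom_cylFamily isPiSystem_cylFamily ?_ ?_ ?_ ?_ S hS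
  · intro δ hδ
    exact ⟨0, ∅, by rw [cylSet_empty, symmDiff_self]; simpa using hδ⟩
  · rintro S ⟨n, s, rfl⟩ δ hδ
    exact ⟨n, {s}, by rw [cylSet_singleton, symmDiff_self]; simpa using hδ⟩
  · intro t _ hC δ hδ
    obtain ⟨m, V, hV⟩ := hC δ hδ
    exact ⟨m, Vᶜ, by rwa [cylSet_compl, compl_symmDiff_compl]⟩
  · intro f hdisj hmeas hC δ hδ
    by_cases hδtop : δ = ∞
    · exact ⟨0, ∅, by rw [hδtop]; exact measure_lt_top μ _⟩
    have hne : ∑' i, μ (f i) ≠ ∞ := by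
      rw [← measure_iUnion hdisj hmeas]; exact measure_ne_top μ _
    have htail := ENNReal.tendsto_sum_nat_add (fun i => μ (f i)) hne
    have hhalf : (0 : ℝ≥0∞) < δ / 2 := ENNReal.half_pos hδ.ne'
    obtain ⟨k, hk⟩ := (htail.eventually_lt_const hhalf).exists
    set δ' : ℝ≥0∞ := δ / 2 / (k + 1) with hδ'def
    have hδ' : 0 < δ' := ENNReal.div_pos hhalf.ne' (by simp)
    choose m V hV using fun i : ℕ => hC i δ' hδ'
    obtain ⟨M, W, hMW⟩ := isCyl_biUnion k (fun i => cylSet (m i) (V i))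
      (fun i _ => ⟨m i, V i, rfl⟩)
    refine ⟨M, W, ?_⟩
    have hsub : (⋃ i, f i) ∆ cylSet M W ⊆
        (⋃ i, f (i + k)) ∪ ⋃ i, ⋃ _ : i < k, f i ∆ cylSet (m i) (V i) := by
      rw [← hMW]
      intro x hx
      rcases Set.mem_symmDiff.mp hx with ⟨hxS, hxC⟩ | ⟨hxC, hxS⟩
      · obtain ⟨j, hj⟩ := Set.mem_iUnion.mp hxS
        rcases lt_or_ge j k with hjk | hjk
        · exact Set.mem_union_right _ (Set.mem_biUnion hjk
            (Set.mem_symmDiff.mpr (Or.inl ⟨hj, fun hc => hxC (Set.mem_biUnion hjk hc)⟩)))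
        · exact Set.mem_union_left _
            (Set.mem_iUnion.mpr ⟨j - k, by rwa [Nat.sub_add_cancel hjk]⟩)
      · obtain ⟨j, hjk, hj⟩ := Set.mem_iUnion₂.mp hxC
        exact Set.mem_union_right _ (Set.mem_biUnion hjk
          (Set.mem_symmDiff.mpr (Or.inr ⟨hj, fun hc => hxS (Set.mem_iUnion.mpr ⟨j, hc⟩)⟩)))
    have hbound2 : μ (⋃ i, ⋃ _ : i < k, f i ∆ cylSet (m i) (V i)) ≤ δ / 2 := by
      have heq : (⋃ i, ⋃ _ : i < k, f i ∆ cylSet (m i) (V i)) =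
          ⋃ i ∈ Finset.range k, f i ∆ cylSet (m i) (V i) := by
        simp only [Finset.mem_range]
      calc μ (⋃ i, ⋃ _ : i < k, f i ∆ cylSet (m i) (V i))
          ≤ ∑ i ∈ Finset.range k, μ (f i ∆ cylSet (m i) (V i)) := by
            rw [heq]; exact measure_biUnion_finset_le _ _
        _ ≤ ∑ _i ∈ Finset.range k, δ' := Finset.sum_le_sum fun i _ => (hV i).le
        _ = (k : ℝ≥0∞) * δ' := by rw [Finset.sum_const, Finset.card_range, nsmul_eq_mul]
        _ ≤ ((k : ℝ≥0∞) + 1) * δ' := by gcongr; exact le_self_add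
        _ ≤ δ / 2 := by
            rw [hδ'def]
            exact_mod_cast ENNReal.mul_div_le
    calc μ ((⋃ i, f i) ∆ cylSet M W)
        ≤ μ (⋃ i, f (i + k)) + μ (⋃ i, ⋃ _ : i < k, f i ∆ cylSet (m i) (V i)) :=
          (measure_mono hsub).trans (measure_union_le _ _)
      _ < δ / 2 + δ / 2 :=
          ENNReal.add_lt_add_of_lt_of_le (measure_ne_top μ _)
            (lt_of_le_of_lt (measure_iUnion_le _) hk) hbound2
      _ = δ := ENNReal.add_halves δ

end DyadicAux

namespace DyadicAux

/-- Any injective-on-a-finset partial map extends to a permutation. -/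
lemma exists_perm_extend {α : Type*} [DecidableEq α] (G : Finset α) (f : α → α)
    (hf : Set.InjOn f ↑G) : ∃ σ : Equiv.Perm α, ∀ u ∈ G, σ u = f u := by
  classical
  induction G using Finset.induction_on with
  | empty => exact ⟨1, by simp⟩
  | @insert a s ha ih =>
      obtain ⟨σ, hσ⟩ := ih (hf.mono (by simp [Set.subset_insert]))
      refine ⟨Equiv.swap (σ a) (f a) * σ, ?_⟩
      intro u hu
      rcases Finset.mem_insert.mp hu with rfl | hus
      · simp [Equiv.Perm.mul_apply, Equiv.swap_apply_left]
      · have h1 : f u ≠ f a := fun hc =>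
          (by rintro rfl; exact ha hus : u ≠ a)
            (hf (by simp [hus]) (by simp) hc)
        have h2 : f u ≠ σ a := by
          intro hc
          have : σ u = σ a := by rw [hσ u hus, hc]
          exact ha (σ.injective this ▸ hus)
        simp only [Equiv.Perm.mul_apply, hσ u hus]
        exact Equiv.swap_apply_of_ne_of_ne h2 h1

lemma disjoint_cyl {m : ℕ} {u u' : Fin m → Bool} (h : u ≠ u') :
    Disjoint (cylSet m {u}) (cylSet m {u'}) := by
  rw [Set.disjoint_left]
  rintro x hx hx'
  exact h (hx.symm.trans hx')

lemma sum_measure_cyl_inter (μ : Measure (ℕ → Bool)) (m : ℕ) {A : Set (ℕ → Bool)}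
    (hA : MeasurableSet A) :
    ∑ u : Fin m → Bool, μ (cylSet m {u} ∩ A) = μ A := by
  classical
  rw [← measure_biUnion_finset (f := fun u => cylSet m {u} ∩ A)]
  · congr 1
    ext x
    simp only [Set.mem_iUnion, Finset.mem_univ, exists_prop, true_and, Set.mem_inter_iff]
    constructor
    · rintro ⟨u, -, hx⟩; exact hx
    · intro hx
      exact ⟨fun j => x (j : ℕ), rfl, hx⟩
  · intro u _ u' _ huu'
    exact Set.disjoint_left.mpr fun x hx hx' =>
      (Set.disjoint_left.mp (disjoint_cyl huu')) hx.1 hx'.1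
  · exact fun u _ => (measurableSet_cylSet m {u}).inter hA

end DyadicAux

open DyadicAux

/-- The map on `{0,1}^ℕ` induced by a permutation `σ` of the set of binary words of length `n`:
it permutes the first `n` coordinates according to `σ` and leaves the others unchanged. -/
def dyadicMap (n : ℕ) (σ : Equiv.Perm (Fin n → Bool)) (x : ℕ → Bool) : ℕ → Bool :=
  fun i => if h : i < n then σ (fun j : Fin n => x (j : ℕ)) ⟨i, h⟩ else x i

/-- On `X = {0,1}^ℕ` with the product Bernoulli measure (characterized by its
values on cylinders), every measure-preserving measurable bijection `T` such that `T x`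
eventually agrees with `x` for a.e. `x` can be approximated in the uniform metric by dyadic
permutations. -/
theorem dyadic_permutations_dense
    (μ : Measure (ℕ → Bool)) [IsProbabilityMeasure μ]
    (hcyl : ∀ (n : ℕ) (s : Fin n → Bool),
      μ {x : ℕ → Bool | ∀ i : Fin n, x (i : ℕ) = s i} = (1 / 2 : ℝ≥0∞) ^ n)
    (T : Equiv.Perm (ℕ → Bool))
    (hT1 : Measurable ⇑T) (hT2 : Measurable ⇑T.symm) (hTmp : MeasurePreserving ⇑T μ μ)
    (hR0 : ∀ᵐ x ∂μ, ∃ N : ℕ, ∀ i ≥ N, T x i = x i) :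
    ∀ ε : ℝ≥0∞, 0 < ε →
      ∃ (n : ℕ) (σ : Equiv.Perm (Fin n → Bool)),
        μ {x : ℕ → Bool | T x ≠ dyadicMap n σ x} < ε := by
  intro ε hε
  classical
  -- a convenient positive finite threshold
  set η : ℝ≥0∞ := min ε 1 / 4 with hηdef
  have hmin0 : min ε 1 ≠ 0 := (lt_min hε zero_lt_one).ne'
  have hmintop : min ε 1 ≠ ∞ := ((min_le_right ε 1).trans_lt ENNReal.one_lt_top).ne
  have hη0 : η ≠ 0 := (ENNReal.div_pos hmin0 (by simp)).ne'
  have hηtop : η ≠ ∞ := (ENNReal.div_lt_top hmintop (by norm_num)).ne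
  have h4η : 4 * η ≤ ε := by
    rw [hηdef, ENNReal.mul_div_cancel' (by norm_num) (by simp)]
    exact min_le_left ε 1
  have hη2pos : (0 : ℝ≥0∞) < η / 2 := ENNReal.half_pos hη0
  have hη2top : η / 2 ≠ ∞ := ne_top_of_le_ne_top hηtop ENNReal.half_le_self
  -- Step A : choose N with μ (Bn N)ᶜ < η/2
  set Bn : ℕ → Set (ℕ → Bool) := fun N => {x | ∀ i, N ≤ i → T x i = x i} with hBndef
  have hBnMeas : ∀ N, MeasurableSet (Bn N) := by
    intro N
    have he : Bn N = ⋂ (i : ℕ) (_ : N ≤ i), {x | T x i = x i} := by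
      ext x; simp [hBndef]
    rw [he]
    exact .iInter fun i => .iInter fun _ =>
      measurableSet_eq_fun ((measurable_pi_apply i).comp hT1)
        (measurable_pi_apply i)
  have hBnMono : Monotone Bn := fun N N' h x hx i hi => hx i (h.trans hi)
  have hInt0 : μ (⋂ N, (Bn N)ᶜ) = 0 := by
    have h0 : μ {x | ¬ ∃ N : ℕ, ∀ i ≥ N, T x i = x i} = 0 := ae_iff.mp hR0
    refine measure_mono_null ?_ h0
    intro x hx
    simp only [Set.mem_iInter, Set.mem_compl_iff] at hx
    simp only [Set.mem_setOf_eq]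
    rintro ⟨N, hNx⟩
    exact hx N fun i hi => hNx i hi
  have htend := tendsto_measure_iInter_atTop (μ := μ)
    (fun N => ((hBnMeas N).compl).nullMeasurableSet)
    (fun N N' h => Set.compl_subset_compl.mpr (hBnMono h)) ⟨0, measure_ne_top μ _⟩
  rw [hInt0] at htend
  obtain ⟨N, hN⟩ := (htend.eventually_lt_const hη2pos).exists
  simp only [Function.comp_apply] at hN
  -- Step B : the sets Bw
  set Bw : (Fin N → Bool) → Set (ℕ → Bool) :=
    fun w => Bn N ∩ {x | ∀ i : Fin N, T x (i : ℕ) = w i} with hBwdef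
  have hBwMeas : ∀ w, MeasurableSet (Bw w) := by
    intro w
    refine (hBnMeas N).inter ?_
    have he : {x : ℕ → Bool | ∀ i : Fin N, T x (i : ℕ) = w i} =
        ⋂ i : Fin N, {x | T x (i : ℕ) = w i} := by ext x; simp
    rw [he]
    exact .iInter fun i => measurableSet_eq_fun
      ((measurable_pi_apply _).comp hT1) measurable_const
  -- Step C : cylinder approximations at a common level M
  have hδw : (0 : ℝ≥0∞) < η / 2 / 2 ^ N :=
    ENNReal.div_pos hη2pos.ne' (ENNReal.pow_ne_top (by norm_num))
  choose mw Vw hVw using fun w : Fin N → Bool =>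
    approx_cyl μ (hBwMeas w) (η / 2 / 2 ^ N) hδw
  set M : ℕ := max N (Finset.univ.sup mw) with hMdef
  have hNM : N ≤ M := le_max_left _ _
  have hmwM : ∀ w, mw w ≤ M := fun w =>
    le_max_of_le_right (Finset.le_sup (Finset.mem_univ w))
  set Cw : (Fin N → Bool) → Set (Fin M → Bool) :=
    fun w => {u | (fun j : Fin (mw w) => u (Fin.castLE (hmwM w) j)) ∈ Vw w} with hCwdef
  have hCweq : ∀ w, cylSet M (Cw w) = cylSet (mw w) (Vw w) :=
    fun w => (cylSet_castLE (hmwM w) (Vw w)).symm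
  set q : ℝ≥0∞ := (1 / 2 : ℝ≥0∞) ^ M with hqdef
  have hq0 : q ≠ 0 := by
    simp [hqdef, pow_ne_zero, ENNReal.div_ne_zero]
  have hqtop : q ≠ ∞ := ENNReal.pow_ne_top (by norm_num)
  have hqcyl : ∀ u : Fin M → Bool, μ (cylSet M {u}) = q := fun u => by
    rw [cylSet_singleton]; exact hcyl M u
  set Dw : (Fin N → Bool) → Set (ℕ → Bool) := fun w => Bw w ∆ cylSet M (Cw w) with hDwdef
  have hDwMeas : ∀ w, MeasurableSet (Dw w) :=
    fun w => (hBwMeas w).symmDiff (measurableSet_cylSet _ _)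
  have hDwμ : ∀ w, μ (Dw w) < η / 2 / 2 ^ N := by
    intro w
    show μ (Bw w ∆ cylSet M (Cw w)) < _
    rw [hCweq w]
    exact hVw w
  -- the error function
  set e : (Fin M → Bool) → ℝ≥0∞ :=
    fun u => μ (cylSet M {u} ∩ (Bn N)ᶜ) + ∑ w, μ (cylSet M {u} ∩ Dw w) with hedef
  have hesum : ∑ u, e u < η := by
    have h1 : ∑ u, e u = μ (Bn N)ᶜ + ∑ w, μ (Dw w) := by
      rw [Finset.sum_add_distrib, sum_measure_cyl_inter μ M (hBnMeas N).compl,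
        Finset.sum_comm]
      congr 1
      exact Finset.sum_congr rfl fun w _ => sum_measure_cyl_inter μ M (hDwMeas w)
    rw [h1]
    have h2 : ∑ w, μ (Dw w) ≤ η / 2 := by
      calc ∑ w, μ (Dw w) ≤ ∑ _w : Fin N → Bool, η / 2 / 2 ^ N :=
            Finset.sum_le_sum fun w _ => (hDwμ w).le
        _ = (Fintype.card (Fin N → Bool) : ℝ≥0∞) * (η / 2 / 2 ^ N) := by
            rw [Finset.sum_const, nsmul_eq_mul]; rfl
        _ = (2 : ℝ≥0∞) ^ N * (η / 2 / 2 ^ N) := by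
            congr 1
            rw [Fintype.card_fun]
            push_cast
            simp
        _ ≤ η / 2 := ENNReal.mul_div_le
    calc μ (Bn N)ᶜ + ∑ w, μ (Dw w) < η / 2 + η / 2 :=
          ENNReal.add_lt_add_of_lt_of_le (ne_top_of_le_ne_top hη2top h2) hN h2
      _ = η := ENNReal.add_halves η
  -- good words
  set t : ℝ≥0∞ := q / 2 / 2 with htdef
  have h4t : 4 * t = q := by
    rw [htdef, show (4 : ℝ≥0∞) = 2 * 2 by norm_num, mul_assoc,
      ENNReal.mul_div_cancel two_ne_zero ENNReal.ofNat_ne_top,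
      ENNReal.mul_div_cancel two_ne_zero ENNReal.ofNat_ne_top]
  set good : Set (Fin M → Bool) := {u | ∃ w, u ∈ Cw w ∧ e u < t} with hgooddef
  set wsel : (Fin M → Bool) → (Fin N → Bool) :=
    fun u => if h : u ∈ good then h.choose else fun _ => false with hwseldef
  have hwsel : ∀ u ∈ good, u ∈ Cw (wsel u) ∧ e u < t := by
    intro u hu
    have : wsel u = hu.choose := dif_pos hu
    rw [this]
    exact hu.choose_spec
  set A : (Fin M → Bool) → Set (ℕ → Bool) :=
    fun u => cylSet M {u} ∩ Bw (wsel u) with hAdef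
  have hAMeas : ∀ u, MeasurableSet (A u) :=
    fun u => (measurableSet_cylSet _ _).inter (hBwMeas _)
  set F : (Fin M → Bool) → (Fin M → Bool) :=
    fun u i => if h : (i : ℕ) < N then wsel u ⟨i, h⟩ else u i with hFdef
  -- key computation : on A u the map T is the dyadic permutation given by F
  have hK3 : ∀ u, ∀ x ∈ A u, ∀ i : ℕ,
      T x i = if h : i < M then F u ⟨i, h⟩ else x i := by
    intro u x hx i
    have hxc : (fun j : Fin M => x (j : ℕ)) = u := hx.1
    have hxBn : ∀ j, N ≤ j → T x j = x j := hx.2.1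
    have hxw : ∀ j : Fin N, T x (j : ℕ) = wsel u j := hx.2.2
    have hxu : ∀ j : Fin M, x (j : ℕ) = u j := fun j => congrFun hxc j
    by_cases hiM : i < M
    · rw [dif_pos hiM]
      show T x i = F u ⟨i, hiM⟩
      by_cases hiN : i < N
      · have : F u ⟨i, hiM⟩ = wsel u ⟨i, hiN⟩ := dif_pos hiN
        rw [this]
        exact hxw ⟨i, hiN⟩
      · have h1 : F u ⟨i, hiM⟩ = u ⟨i, hiM⟩ := dif_neg hiN
        rw [h1, ← hxu ⟨i, hiM⟩]
        exact hxBn i (le_of_not_gt hiN)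
    · rw [dif_neg hiM]
      exact hxBn i (hNM.trans (le_of_not_gt hiM))
  -- K2 : the part of the cylinder not covered by A u is small
  have hK2 : ∀ u ∈ good, μ (cylSet M {u} \ Bw (wsel u)) ≤ e u := by
    intro u hu
    have hsubΔ : cylSet M {u} \ Bw (wsel u) ⊆ cylSet M {u} ∩ Dw (wsel u) := by
      rintro x ⟨hxc, hxB⟩
      refine ⟨hxc, ?_⟩
      have hxC : x ∈ cylSet M (Cw (wsel u)) := by
        show (fun j : Fin M => x (j : ℕ)) ∈ Cw (wsel u)
        rw [show (fun j : Fin M => x (j : ℕ)) = u from hxc]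
        exact (hwsel u hu).1
      exact Set.mem_symmDiff.mpr (Or.inr ⟨hxC, hxB⟩)
    calc μ (cylSet M {u} \ Bw (wsel u)) ≤ μ (cylSet M {u} ∩ Dw (wsel u)) :=
          measure_mono hsubΔ
      _ ≤ ∑ w, μ (cylSet M {u} ∩ Dw w) :=
          Finset.single_le_sum (f := fun w => μ (cylSet M {u} ∩ Dw w))
            (fun _ _ => zero_le) (Finset.mem_univ (wsel u))
      _ ≤ e u := le_add_self
  -- K1 : A u nearly fills the cylinder
  have hK1 : ∀ u ∈ good, q ≤ μ (A u) + e u := by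
    intro u hu
    have hs : cylSet M {u} ⊆ A u ∪ (cylSet M {u} \ Bw (wsel u)) := by
      intro x hx
      by_cases hB : x ∈ Bw (wsel u)
      · exact Or.inl ⟨hx, hB⟩
      · exact Or.inr ⟨hx, hB⟩
    calc q = μ (cylSet M {u}) := (hqcyl u).symm
      _ ≤ μ (A u) + μ (cylSet M {u} \ Bw (wsel u)) :=
          (measure_mono hs).trans (measure_union_le _ _)
      _ ≤ μ (A u) + e u := add_le_add_right (hK2 u hu) _
  -- the measurable equivalence and its inverse
  set Tm : (ℕ → Bool) ≃ᵐ (ℕ → Bool) :=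
    { toEquiv := T, measurable_toFun := hT1, measurable_invFun := hT2 } with hTmdef
  have hTsymm : MeasurePreserving ⇑Tm.symm μ μ :=
    MeasurePreserving.symm Tm hTmp
  have hpre : ∀ u, μ (⇑Tm.symm ⁻¹' A u) = μ (A u) := fun u =>
    hTsymm.measure_preimage (hAMeas u).nullMeasurableSet
  have hpresub : ∀ u, ⇑Tm.symm ⁻¹' A u ⊆ cylSet M {F u} := by
    intro u x hx
    show (fun j : Fin M => x (j : ℕ)) ∈ ({F u} : Set _)
    rw [Set.mem_singleton_iff]
    funext j
    have h3 := hK3 u (Tm.symm x) hx (j : ℕ)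
    rw [show T (Tm.symm x) = x from T.apply_symm_apply x] at h3
    rw [h3, dif_pos j.isLt]
  -- injectivity of F on good words
  have hinj : Set.InjOn F good := by
    intro u hu u' hu' hFeq
    by_contra hne
    have hd : Disjoint (⇑Tm.symm ⁻¹' A u) (⇑Tm.symm ⁻¹' A u') := by
      refine Disjoint.preimage _ ?_
      exact Set.disjoint_left.mpr fun x hx hx' =>
        Set.disjoint_left.mp (disjoint_cyl hne) hx.1 hx'.1
    have hsum : μ (A u) + μ (A u') ≤ q := by
      rw [← hpre u, ← hpre u',
        ← measure_union hd (Tm.symm.measurable (hAMeas u'))]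
      calc μ (⇑Tm.symm ⁻¹' A u ∪ ⇑Tm.symm ⁻¹' A u') ≤ μ (cylSet M {F u}) := by
            refine measure_mono (Set.union_subset (hpresub u) ?_)
            rw [hFeq]
            exact hpresub u'
        _ = q := hqcyl _
    have hq2 : q + q ≤ q + (e u + e u') := by
      calc q + q ≤ (μ (A u) + e u) + (μ (A u') + e u') :=
            add_le_add (hK1 u hu) (hK1 u' hu')
        _ = (μ (A u) + μ (A u')) + (e u + e u') := by ring
        _ ≤ q + (e u + e u') := add_le_add_left hsum _
    have hq3 : q ≤ e u + e u' := (ENNReal.add_le_add_iff_left hqtop).mp hq2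
    have hlt : e u + e u' < q := by
      have h5 : e u + e u' < t + t :=
        ENNReal.add_lt_add (hwsel u hu).2 (hwsel u' hu').2
      rw [htdef, ENNReal.add_halves] at h5
      exact h5.trans_le ENNReal.half_le_self
    exact absurd (lt_of_le_of_lt hq3 hlt) (lt_irrefl q)
  -- extend F to a permutation
  have hgoodfin : good.Finite := Set.toFinite good
  obtain ⟨σ, hσ⟩ := exists_perm_extend hgoodfin.toFinset F
    (by rwa [Set.Finite.coe_toFinset])
  refine ⟨M, σ, ?_⟩
  -- the exceptional sets
  set D : (Fin M → Bool) → Set (ℕ → Bool) :=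
    fun u => if u ∈ good then cylSet M {u} \ A u else cylSet M {u} with hDdef
  have hcover : {x | T x ≠ dyadicMap M σ x} ⊆
      ⋃ u ∈ (Finset.univ : Finset (Fin M → Bool)), D u := by
    intro x hx
    set u : Fin M → Bool := fun j => x (j : ℕ) with hudef
    have hxc : x ∈ cylSet M {u} := rfl
    refine Set.mem_biUnion (Finset.mem_univ u) ?_
    show x ∈ if u ∈ good then cylSet M {u} \ A u else cylSet M {u}
    by_cases hg : u ∈ good
    · rw [if_pos hg]
      refine ⟨hxc, fun hA => hx ?_⟩
      funext i
      have h3 := hK3 u x hA i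
      show T x i = dyadicMap M σ x i
      rw [h3]
      unfold dyadicMap
      by_cases hiM : i < M
      · rw [dif_pos hiM, dif_pos hiM, ← hudef,
          hσ u (by rw [Set.Finite.mem_toFinset]; exact hg)]
      · rw [dif_neg hiM, dif_neg hiM]
    · rw [if_neg hg]; exact hxc
  have hDbound : ∀ u, μ (D u) ≤ 4 * e u := by
    intro u
    by_cases hg : u ∈ good
    · have hDeq : D u = cylSet M {u} \ A u := if_pos hg
      rw [hDeq, hAdef]
      have : cylSet M {u} \ (cylSet M {u} ∩ Bw (wsel u)) = cylSet M {u} \ Bw (wsel u) :=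
        Set.diff_self_inter
      rw [this]
      exact (hK2 u hg).trans (le_mul_of_one_le_left (zero_le) (by norm_num))
    · have hDeq : D u = cylSet M {u} := if_neg hg
      rw [hDeq]
      by_cases hw : ∃ w, u ∈ Cw w
      · obtain ⟨w, hwC⟩ := hw
        have hte : t ≤ e u := le_of_not_gt fun hlt => hg ⟨w, hwC, hlt⟩
        calc μ (cylSet M {u}) = q := hqcyl u
          _ = 4 * t := h4t.symm
          _ ≤ 4 * e u := mul_le_mul_right hte 4
      · push_neg at hw
        have hs : cylSet M {u} ⊆
            (cylSet M {u} ∩ (Bn N)ᶜ) ∪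
              ⋃ w ∈ (Finset.univ : Finset (Fin N → Bool)), (cylSet M {u} ∩ Dw w) := by
          intro x hx
          by_cases hB : x ∈ Bn N
          · refine Or.inr ?_
            set w : Fin N → Bool := fun i => T x (i : ℕ) with hwdef
            refine Set.mem_biUnion (Finset.mem_univ w) ⟨hx, ?_⟩
            have hxBw : x ∈ Bw w := ⟨hB, fun i => rfl⟩
            have hxnC : x ∉ cylSet M (Cw w) := by
              intro hc
              have : (fun j : Fin M => x (j : ℕ)) ∈ Cw w := hc
              rw [show (fun j : Fin M => x (j : ℕ)) = u from hx] at this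
              exact hw w this
            exact Set.mem_symmDiff.mpr (Or.inl ⟨hxBw, hxnC⟩)
          · exact Or.inl ⟨hx, hB⟩
        calc μ (cylSet M {u})
            ≤ μ (cylSet M {u} ∩ (Bn N)ᶜ) +
                μ (⋃ w ∈ (Finset.univ : Finset (Fin N → Bool)), (cylSet M {u} ∩ Dw w)) :=
              (measure_mono hs).trans (measure_union_le _ _)
          _ ≤ μ (cylSet M {u} ∩ (Bn N)ᶜ) + ∑ w, μ (cylSet M {u} ∩ Dw w) :=
              add_le_add_right (measure_biUnion_finset_le _ _) _
          _ = e u := rfl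
          _ ≤ 4 * e u := le_mul_of_one_le_left (zero_le) (by norm_num)
  calc μ {x | T x ≠ dyadicMap M σ x}
      ≤ ∑ u, μ (D u) := (measure_mono hcover).trans (measure_biUnion_finset_le _ _)
    _ ≤ ∑ u, 4 * e u := Finset.sum_le_sum fun u _ => hDbound u
    _ = 4 * ∑ u, e u := (Finset.mul_sum _ _ _).symm
    _ < 4 * η := (ENNReal.mul_lt_mul_iff_right (by norm_num) (by simp)).mpr hesum
    _ ≤ ε := h4η
end

section
/- Let X = {0,1}^ℕ with the product measure μ = ⊗_{n∈ℕ}(½δ_0 + ½δ_1), let T_0 be the odometer, and for n ≥ 2 let U_n be the dyadic permutation of X induced by the transposition of {0,1}^n exchanging the words 0^{n-1}1 and 1^{n-1}0. Then for every n ≥ 2 and every permutation σ of {0,1}^n, there exists an element w of the subgroup of bijections of X generated by T_0 and U_n such that w(x) = σ̃(x) for μ-a.e. x ∈ X, where σ̃ is the dyadic permutation induced by σ. -/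
open MeasureTheory
open scoped ENNReal

section Odometer
open Classical
/-- The odometer ("adding one with carry to the right") on `{0,1}^ℕ`, sending the constant-one
sequence to the constant-zero sequence. -/
noncomputable def odometer (x : ℕ → Bool) : ℕ → Bool :=
  if h : ∃ k, x k = false then
    fun i => if i < Nat.find h then false else if i = Nat.find h then true else x i
  else fun _ => false
end Odometer

/-- The binary word `0^(n-1) 1` of length `n`. -/
def word01 (n : ℕ) : Fin n → Bool := fun i => decide ((i : ℕ) = n - 1)

/-- The binary word `1^(n-1) 0` of length `n`. -/
def word10 (n : ℕ) : Fin n → Bool := fun i => !decide ((i : ℕ) = n - 1)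

namespace DyadicAux

open Equiv Finset

/-- first `n` coordinates of a sequence -/
def firstn (n : ℕ) (x : ℕ → Bool) : Fin n → Bool := fun j => x j

def ones (n : ℕ) : Fin n → Bool := fun _ => true

def extend (n : ℕ) (s : Fin n → Bool) : ℕ → Bool :=
  fun i => if h : i < n then s ⟨i, h⟩ else false

/-- successor modulo `2^n` on words of length `n` -/
noncomputable def wsucc (n : ℕ) (s : Fin n → Bool) : Fin n → Bool :=
  firstn n (odometer (extend n s))

lemma exists_false_of_ne_ones {n : ℕ} {s : Fin n → Bool} (hs : s ≠ ones n) :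
    ∃ j : Fin n, s j = false := by
  by_contra h
  push_neg at h
  exact hs (funext fun j => by simpa [ones] using h j)

lemma wsucc_spec {n : ℕ} {s : Fin n → Bool} (hs : s ≠ ones n) :
    ∃ k : Fin n, s k = false ∧ (∀ j : Fin n, j < k → s j = true) ∧
      (∀ j : Fin n, wsucc n s j =
        if j < k then false else if j = k then true else s j) := by
  obtain ⟨j0, hj0⟩ := exists_false_of_ne_ones hs
  have hx : ∃ m, extend n s m = false := ⟨j0, by simp [extend, j0.isLt, hj0]⟩
  classical
  have hm : Nat.find hx < n := by
    have := Nat.find_min' hx (m := (j0 : ℕ)) (by simp [extend, j0.isLt, hj0])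
    exact lt_of_le_of_lt this j0.isLt
  refine ⟨⟨Nat.find hx, hm⟩, ?_, ?_, ?_⟩
  · have h1 := Nat.find_spec hx
    rw [show extend n s (Nat.find hx) = s ⟨Nat.find hx, hm⟩ from dif_pos hm] at h1
    exact h1
  · intro j hj
    have hj' : (j : ℕ) < Nat.find hx := hj
    have := Nat.find_min hx hj'
    simp only [extend, j.isLt, dif_pos, Fin.eta] at this
    simpa using this
  · intro j
    have hw : wsucc n s j = odometer (extend n s) (j : ℕ) := rfl
    rw [hw, odometer, dif_pos hx]
    by_cases h1 : (j : ℕ) < Nat.find hx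
    · simp [h1, show j < ⟨Nat.find hx, hm⟩ from h1]
    · by_cases h2 : (j : ℕ) = Nat.find hx
      · simp [h1, h2, show j = ⟨Nat.find hx, hm⟩ from Fin.ext h2]
      · have hjk : ¬ (j < ⟨Nat.find hx, hm⟩) := h1
        have hjk' : j ≠ ⟨Nat.find hx, hm⟩ := fun h => h2 (by simpa using congrArg Fin.val h)
        rw [if_neg h1, if_neg h2, if_neg hjk, if_neg hjk']
        simp only [extend]
        rw [dif_pos j.isLt, Fin.eta]

lemma odometer_dyadic {n : ℕ} {x : ℕ → Bool} (hs : firstn n x ≠ ones n) :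
    odometer x = fun i => if h : i < n then wsucc n (firstn n x) ⟨i, h⟩ else x i := by
  classical
  obtain ⟨j0, hj0⟩ := exists_false_of_ne_ones hs
  have hj0' : x (j0 : ℕ) = false := hj0
  have hx : ∃ m, x m = false := ⟨j0, hj0'⟩
  have hx' : ∃ m, extend n (firstn n x) m = false :=
    ⟨j0, by simp [extend, firstn, j0.isLt, hj0']⟩
  have hfind : Nat.find hx < n :=
    lt_of_le_of_lt (Nat.find_min' hx hj0') j0.isLt
  have hfind' : Nat.find hx' < n :=
    lt_of_le_of_lt (Nat.find_min' hx' (by simp [extend, firstn, j0.isLt, hj0'])) j0.isLt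
  have heq : Nat.find hx' = Nat.find hx := by
    apply le_antisymm
    · exact Nat.find_min' hx' (by simp [extend, firstn, hfind, Nat.find_spec hx])
    · refine Nat.find_min' hx ?_
      have h1 := Nat.find_spec hx'
      rw [show extend n (firstn n x) (Nat.find hx') = x (Nat.find hx') from dif_pos hfind'] at h1
      exact h1
  funext i
  by_cases hi : i < n
  · have : wsucc n (firstn n x) ⟨i, hi⟩ = odometer (extend n (firstn n x)) i := rfl
    rw [dif_pos hi, this, odometer, odometer, dif_pos hx, dif_pos hx', heq]
    by_cases h1 : i < Nat.find hx
    · simp [h1]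
    · by_cases h2 : i = Nat.find hx
      · simp [h1, h2]
      · simp [h1, h2, extend, firstn, hi]
  · have hgt : ¬ i < Nat.find hx := fun h => hi (lt_trans h hfind)
    have hne : i ≠ Nat.find hx := fun h => hi (h ▸ hfind)
    rw [dif_neg hi, odometer, dif_pos hx]
    simp [hgt, hne]

lemma odometer_ones {n : ℕ} {x : ℕ → Bool} (hx : ∀ j : Fin n, x (j : ℕ) = true) :
    ∀ j : Fin n, odometer x (j : ℕ) = false := by
  classical
  intro j
  by_cases h : ∃ k, x k = false
  · have hfind : n ≤ Nat.find h := by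
      by_contra hlt
      push_neg at hlt
      have := Nat.find_spec h
      rw [hx ⟨Nat.find h, hlt⟩] at this
      simp at this
    rw [odometer, dif_pos h]
    simp [lt_of_lt_of_le j.isLt hfind]
  · rw [odometer, dif_neg h]

end DyadicAux

namespace DyadicAux
open Equiv Finset

lemma firstn_dyadic {n : ℕ} (σ : Equiv.Perm (Fin n → Bool)) (x : ℕ → Bool) :
    firstn n (dyadicMap n σ x) = σ (firstn n x) := by
  funext j
  show dyadicMap n σ x (j : ℕ) = _
  rw [dyadicMap, dif_pos j.isLt, Fin.eta]
  rfl

lemma dyadicMap_apply_of_ge {n : ℕ} (σ : Equiv.Perm (Fin n → Bool)) (x : ℕ → Bool)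
    {i : ℕ} (hi : ¬ i < n) : dyadicMap n σ x i = x i := by
  rw [dyadicMap, dif_neg hi]

lemma dyadic_comp {n : ℕ} (σ σ' : Equiv.Perm (Fin n → Bool)) (x : ℕ → Bool) :
    dyadicMap n σ (dyadicMap n σ' x) = dyadicMap n (σ * σ') x := by
  funext i
  by_cases hi : i < n
  · show dyadicMap n σ (dyadicMap n σ' x) i = _
    rw [dyadicMap, dif_pos hi, dyadicMap, dif_pos hi]
    have h1 : (fun j : Fin n => dyadicMap n σ' x (j : ℕ)) = σ' (firstn n x) :=
      firstn_dyadic σ' x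
    rw [h1]
    rfl
  · rw [dyadicMap_apply_of_ge _ _ hi, dyadicMap_apply_of_ge _ _ hi,
      dyadicMap_apply_of_ge _ _ hi]

lemma dyadic_one {n : ℕ} (x : ℕ → Bool) : dyadicMap n 1 x = x := by
  funext i
  by_cases hi : i < n
  · rw [dyadicMap, dif_pos hi]; rfl
  · rw [dyadicMap, dif_neg hi]

/-- `dyadicMap` as a permutation. -/
def DpAux (n : ℕ) (σ : Equiv.Perm (Fin n → Bool)) : Equiv.Perm (ℕ → Bool) where
  toFun := dyadicMap n σ
  invFun := dyadicMap n σ⁻¹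
  left_inv := fun x => by rw [dyadic_comp, inv_mul_cancel, dyadic_one]
  right_inv := fun x => by rw [dyadic_comp, mul_inv_cancel, dyadic_one]

/-- `dyadicMap` as a monoid hom into the permutation group. -/
def Dp (n : ℕ) : Equiv.Perm (Fin n → Bool) →* Equiv.Perm (ℕ → Bool) where
  toFun := DpAux n
  map_one' := Equiv.ext fun x => dyadic_one x
  map_mul' := fun σ σ' => Equiv.ext fun x => (dyadic_comp σ σ' x).symm

@[simp] lemma Dp_apply {n : ℕ} (σ : Equiv.Perm (Fin n → Bool)) (x : ℕ → Bool) :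
    Dp n σ x = dyadicMap n σ x := rfl

lemma dyadic_fix {n : ℕ} {σ : Equiv.Perm (Fin n → Bool)} {x : ℕ → Bool}
    (h : σ (firstn n x) = firstn n x) : dyadicMap n σ x = x := by
  funext i
  by_cases hi : i < n
  · rw [dyadicMap, dif_pos hi]
    have : σ (firstn n x) ⟨i, hi⟩ = firstn n x ⟨i, hi⟩ := by rw [h]
    exact this
  · rw [dyadicMap, dif_neg hi]

end DyadicAux

namespace DyadicAux
open Equiv Finset

def zeros (n : ℕ) : Fin n → Bool := fun _ => false

/-- the value of a word as an equivalence with `Fin (2^n)` -/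
def E (n : ℕ) : (Fin n → Bool) ≃ Fin (2 ^ n) :=
  (Equiv.arrowCongr (Equiv.refl (Fin n)) finTwoEquiv.symm).trans finFunctionFinEquiv

def val (n : ℕ) (s : Fin n → Bool) : ℕ := (E n s : ℕ)

lemma val_apply {n : ℕ} (s : Fin n → Bool) :
    val n s = ∑ i : Fin n, (cond (s i) 1 0) * 2 ^ (i : ℕ) := by
  rw [val, E]
  rw [Equiv.trans_apply, finFunctionFinEquiv_apply]
  apply Finset.sum_congr rfl
  intro i _
  congr 1
  cases h : s i <;> simp [Equiv.arrowCongr, h, finTwoEquiv]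

lemma val_lt {n : ℕ} (s : Fin n → Bool) : val n s < 2 ^ n := (E n s).isLt

lemma val_inj {n : ℕ} {s s' : Fin n → Bool} (h : val n s = val n s') : s = s' :=
  (E n).injective (Fin.ext h)

lemma geom_sum_two (k : ℕ) : (∑ i ∈ Finset.range k, 2 ^ i) + 1 = 2 ^ k := by
  induction k with
  | zero => simp
  | succ k ih => rw [Finset.sum_range_succ, pow_succ]; omega

lemma val_sum_range {n : ℕ} (w : Fin n → Bool) :
    val n w = ∑ i ∈ Finset.range n,
      (if h : i < n then (cond (w ⟨i, h⟩) 1 0) * 2 ^ i else 0) := by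
  rw [val_apply,
    ← Fin.sum_univ_eq_sum_range (fun i => if h : i < n then (cond (w ⟨i, h⟩) 1 0) * 2 ^ i else 0)]
  apply Finset.sum_congr rfl
  intro i _
  rw [dif_pos i.isLt, Fin.eta]

lemma val_wsucc {n : ℕ} {s : Fin n → Bool} (hs : s ≠ ones n) :
    val n (wsucc n s) = val n s + 1 := by
  classical
  obtain ⟨k, hk0, hklt, hw⟩ := wsucc_spec hs
  set K : ℕ := (k : ℕ) with hK
  have hKn : K < n := k.isLt
  set f : (Fin n → Bool) → ℕ → ℕ :=
    fun w i => if h : i < n then (cond (w ⟨i, h⟩) 1 0) * 2 ^ i else 0 with hf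
  have hsplit : ∀ w : Fin n → Bool,
      val n w = (∑ i ∈ Finset.Ico 0 K, f w i) + (f w K + ∑ i ∈ Finset.Ico (K + 1) n, f w i) := by
    intro w
    rw [val_sum_range w, Finset.range_eq_Ico,
      ← Finset.sum_Ico_consecutive _ (Nat.zero_le K) (le_of_lt hKn),
      Finset.sum_eq_sum_Ico_succ_bot hKn]
  have htail : ∀ i ∈ Finset.Ico (K + 1) n, f (wsucc n s) i = f s i := by
    intro i hi
    obtain ⟨hi1, hi2⟩ := Finset.mem_Ico.mp hi
    rw [hf]
    simp only
    rw [dif_pos hi2, dif_pos hi2]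
    have h1 : ¬ (⟨i, hi2⟩ : Fin n) < k := by
      simp only [Fin.lt_def]
      omega
    have h2 : (⟨i, hi2⟩ : Fin n) ≠ k := by
      intro h
      have := congrArg Fin.val h
      simp only [hK] at this ⊢
      omega
    rw [hw ⟨i, hi2⟩, if_neg h1, if_neg h2]
  have hlow_s : ∀ i ∈ Finset.Ico 0 K, f s i = 2 ^ i := by
    intro i hi
    obtain ⟨-, hi2⟩ := Finset.mem_Ico.mp hi
    have hin : i < n := lt_trans hi2 hKn
    have : s ⟨i, hin⟩ = true := hklt ⟨i, hin⟩ (by simpa [Fin.lt_def] using hi2)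
    rw [hf]
    simp only
    rw [dif_pos hin, this]
    simp
  have hlow_w : ∀ i ∈ Finset.Ico 0 K, f (wsucc n s) i = 0 := by
    intro i hi
    obtain ⟨-, hi2⟩ := Finset.mem_Ico.mp hi
    have hin : i < n := lt_trans hi2 hKn
    rw [hf]
    simp only
    rw [dif_pos hin, hw ⟨i, hin⟩, if_pos (by simpa [Fin.lt_def] using hi2)]
    simp
  have hfsK : f s K = 0 := by
    rw [hf]; simp only
    rw [dif_pos hKn]
    have : s ⟨K, hKn⟩ = false := by rw [show (⟨K, hKn⟩ : Fin n) = k from Fin.ext rfl]; exact hk0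
    rw [this]; simp
  have hfwK : f (wsucc n s) K = 2 ^ K := by
    rw [hf]; simp only
    rw [dif_pos hKn, hw ⟨K, hKn⟩,
      if_neg (by simp [Fin.lt_def, hK]), if_pos (Fin.ext rfl : (⟨K, hKn⟩ : Fin n) = k)]
    simp
  have htail' : (∑ i ∈ Finset.Ico (K + 1) n, f (wsucc n s) i)
      = ∑ i ∈ Finset.Ico (K + 1) n, f s i := Finset.sum_congr rfl htail
  have hlow_w' : (∑ i ∈ Finset.Ico 0 K, f (wsucc n s) i) = 0 := Finset.sum_eq_zero hlow_w
  rw [hsplit, hsplit, htail', hlow_w', hfsK, hfwK]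
  have hlow : (∑ i ∈ Finset.Ico 0 K, f s i) + 1 = 2 ^ K := by
    rw [Finset.sum_congr rfl hlow_s, ← Finset.range_eq_Ico]
    exact geom_sum_two K
  omega

lemma wsucc_inj {n : ℕ} {a b : Fin n → Bool} (ha : a ≠ ones n) (hb : b ≠ ones n)
    (h : wsucc n a = wsucc n b) : a = b := by
  apply val_inj
  have := congrArg (val n) h
  rw [val_wsucc ha, val_wsucc hb] at this
  omega

lemma val_ones {n : ℕ} : val n (ones n) = 2 ^ n - 1 := by
  by_contra h
  set s' : Fin n → Bool := (E n).symm ⟨2 ^ n - 1, by have h2 : 0 < 2 ^ n := Nat.two_pow_pos n; omega⟩ with hs'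
  have hvs' : val n s' = 2 ^ n - 1 := by
    rw [val, hs', Equiv.apply_symm_apply]
  have hne : s' ≠ ones n := fun he => h (he ▸ hvs')
  have := val_wsucc hne
  rw [hvs'] at this
  have hlt := val_lt (wsucc n s')
  have hpos : 0 < 2 ^ n := Nat.two_pow_pos n
  omega

lemma wsucc_ne_zeros {n : ℕ} {s : Fin n → Bool} (hs : s ≠ ones n) :
    wsucc n s ≠ zeros n := by
  intro h
  have h0 : val n (zeros n) = 0 := by
    rw [val_apply]
    simp [zeros]
  have := val_wsucc hs
  rw [h, h0] at this
  omega

end DyadicAux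

namespace DyadicAux
open Equiv Finset

lemma firstn_odometer {n : ℕ} {x : ℕ → Bool} (hs : firstn n x ≠ ones n) :
    firstn n (odometer x) = wsucc n (firstn n x) := by
  funext j
  show odometer x (j : ℕ) = _
  rw [odometer_dyadic hs]
  simp

lemma firstn_odometer_ones {n : ℕ} {x : ℕ → Bool} (hs : firstn n x = ones n) :
    firstn n (odometer x) = zeros n := by
  funext j
  exact odometer_ones (fun i => congrFun hs i) j

lemma step {n : ℕ} (σ ρ : Equiv.Perm (Fin n → Bool)) (x : ℕ → Bool)
    (h1 : firstn n x ≠ ones n) (h2 : σ (firstn n x) ≠ ones n)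
    (h3 : ρ (wsucc n (firstn n x)) = wsucc n (σ (firstn n x))) :
    odometer (dyadicMap n σ x) = dyadicMap n ρ (odometer x) := by
  have hfd : firstn n (dyadicMap n σ x) = σ (firstn n x) := firstn_dyadic σ x
  have hne : firstn n (dyadicMap n σ x) ≠ ones n := by rw [hfd]; exact h2
  funext i
  by_cases hi : i < n
  · have lhs : odometer (dyadicMap n σ x) i = wsucc n (σ (firstn n x)) ⟨i, hi⟩ := by
      rw [odometer_dyadic hne]
      simp only
      rw [dif_pos hi, hfd]
    have rhs : dyadicMap n ρ (odometer x) i = ρ (firstn n (odometer x)) ⟨i, hi⟩ := by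
      rw [dyadicMap, dif_pos hi]; rfl
    rw [lhs, rhs, firstn_odometer h1, h3]
  · have lhs : odometer (dyadicMap n σ x) i = dyadicMap n σ x i := by
      rw [odometer_dyadic hne]
      simp only
      rw [dif_neg hi]
    rw [lhs, dyadicMap_apply_of_ge _ _ hi, dyadicMap_apply_of_ge _ _ hi]
    rw [odometer_dyadic h1]
    simp only
    rw [dif_neg hi]

lemma step_ones {n : ℕ} (σ ρ : Equiv.Perm (Fin n → Bool)) (x : ℕ → Bool)
    (h1 : firstn n x = ones n) (h2 : σ (firstn n x) = firstn n x)
    (h3 : ρ (zeros n) = zeros n) :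
    odometer (dyadicMap n σ x) = dyadicMap n ρ (odometer x) := by
  rw [dyadic_fix h2]
  rw [eq_comm]
  apply dyadic_fix
  rw [firstn_odometer_ones h1, h3]

lemma conj_step {n : ℕ} (a b : Fin n → Bool) (ha : a ≠ ones n) (hb : b ≠ ones n)
    (x : ℕ → Bool) :
    odometer (dyadicMap n (Equiv.swap a b) x)
      = dyadicMap n (Equiv.swap (wsucc n a) (wsucc n b)) (odometer x) := by
  classical
  have hzs : wsucc n a ≠ zeros n := wsucc_ne_zeros ha
  have hzs' : wsucc n b ≠ zeros n := wsucc_ne_zeros hb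
  by_cases h1 : firstn n x = ones n
  · apply step_ones
    · exact h1
    · rw [h1]
      exact Equiv.swap_apply_of_ne_of_ne (fun h => ha h.symm) (fun h => hb h.symm)
    · exact Equiv.swap_apply_of_ne_of_ne (Ne.symm hzs) (Ne.symm hzs')
  · by_cases hxa : firstn n x = a
    · apply step _ _ _ h1
      · rw [hxa, Equiv.swap_apply_left]; exact hb
      · rw [hxa, Equiv.swap_apply_left, Equiv.swap_apply_left]
    · by_cases hxb : firstn n x = b
      · apply step _ _ _ h1
        · rw [hxb, Equiv.swap_apply_right]; exact ha
        · rw [hxb, Equiv.swap_apply_right, Equiv.swap_apply_right]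
      · apply step _ _ _ h1
        · rw [Equiv.swap_apply_of_ne_of_ne hxa hxb]; exact h1
        · rw [Equiv.swap_apply_of_ne_of_ne hxa hxb]
          apply Equiv.swap_apply_of_ne_of_ne
          · exact fun h => hxa (wsucc_inj h1 ha h)
          · exact fun h => hxb (wsucc_inj h1 hb h)

/-- conjugation of a dyadic transposition by the odometer -/
lemma conj_perm {n : ℕ} (t : Equiv.Perm (ℕ → Bool)) (ht : ∀ x, t x = odometer x)
    (a b : Fin n → Bool) (ha : a ≠ ones n) (hb : b ≠ ones n) :
    t * Dp n (Equiv.swap a b) * t⁻¹ = Dp n (Equiv.swap (wsucc n a) (wsucc n b)) := by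
  have key : ∀ y, t (Dp n (Equiv.swap a b) y)
      = Dp n (Equiv.swap (wsucc n a) (wsucc n b)) (t y) := by
    intro y
    rw [ht, ht, Dp_apply, Dp_apply]
    exact conj_step a b ha hb y
  refine Equiv.ext fun x => ?_
  have := key (t⁻¹ x)
  rw [show t (t⁻¹ x) = x from t.apply_symm_apply x] at this
  simpa using this

end DyadicAux

namespace DyadicAux
open Equiv Finset

/-- the word of value `k` (mod `2^n`) -/
def sk (n : ℕ) (k : ℕ) : Fin n → Bool :=
  (E n).symm ⟨k % 2 ^ n, Nat.mod_lt _ (Nat.two_pow_pos n)⟩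

lemma val_sk {n : ℕ} {k : ℕ} (hk : k < 2 ^ n) : val n (sk n k) = k := by
  rw [val, sk, Equiv.apply_symm_apply]
  exact Nat.mod_eq_of_lt hk

lemma sk_val {n : ℕ} (s : Fin n → Bool) : sk n (val n s) = s := by
  have h1 : (⟨val n s % 2 ^ n, Nat.mod_lt _ (Nat.two_pow_pos n)⟩ :
      Fin (2 ^ n)) = E n s := Fin.ext (Nat.mod_eq_of_lt (val_lt s))
  rw [sk, h1, Equiv.symm_apply_apply]

lemma sk_ne_ones {n : ℕ} {k : ℕ} (hk : k < 2 ^ n) (hk' : k ≠ 2 ^ n - 1) :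
    sk n k ≠ ones n := by
  intro h
  apply hk'
  rw [← val_sk hk, h, val_ones]

lemma wsucc_sk {n : ℕ} {k : ℕ} (hk : k + 1 < 2 ^ n) :
    wsucc n (sk n k) = sk n (k + 1) := by
  apply val_inj
  rw [val_wsucc (sk_ne_ones (by omega) (by omega)), val_sk (by omega), val_sk hk]

lemma w10_ne_ones {n : ℕ} (hn : 1 ≤ n) : word10 n ≠ ones n := by
  intro h
  have := congrFun h ⟨n - 1, by omega⟩
  simp [word10, ones] at this

lemma wsucc_w10 {n : ℕ} (hn : 2 ≤ n) : wsucc n (word10 n) = word01 n := by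
  obtain ⟨k, hk0, hklt, hw⟩ := wsucc_spec (w10_ne_ones (n := n) (by omega))
  have hkval : (k : ℕ) = n - 1 := by simpa [word10] using hk0
  funext j
  rw [hw j, word01]
  have hj : (j : ℕ) < n := j.isLt
  by_cases h1 : (j : ℕ) < n - 1
  · rw [if_pos (show j < k by rw [Fin.lt_def, hkval]; omega)]
    have : (j : ℕ) ≠ n - 1 := by omega
    simp [this]
  · have hje : (j : ℕ) = n - 1 := by omega
    rw [if_neg (show ¬ j < k by rw [Fin.lt_def, hkval]; omega),
      if_pos (Fin.ext (by rw [hje, hkval]))]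
    simp [hje]

end DyadicAux

open DyadicAux in
/-- Let `t` be the odometer and, for `n ≥ 2`, let `u` be the dyadic permutation
`U n` induced by the transposition of `{0,1}^n` exchanging `0^(n-1) 1` and `1^(n-1) 0`. Then
for every permutation `σ` of `{0,1}^n`, the induced dyadic permutation of `{0,1}^ℕ` agrees
μ-a.e. with some element of the subgroup generated by `t` and `u`, where `μ` is the product
Bernoulli measure (characterized by its values on cylinders). -/
theorem dyadic_permutation_mem_closure_odometer_transposition
    (μ : Measure (ℕ → Bool)) [IsProbabilityMeasure μ]
    (hcyl : ∀ (n : ℕ) (s : Fin n → Bool),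
      μ {x : ℕ → Bool | ∀ i : Fin n, x (i : ℕ) = s i} = (1 / 2 : ℝ≥0∞) ^ n)
    (t : Equiv.Perm (ℕ → Bool)) (ht : ∀ x, t x = odometer x)
    (n : ℕ) (hn : 2 ≤ n)
    (u : Equiv.Perm (ℕ → Bool))
    (hu : ∀ x, u x = dyadicMap n (Equiv.swap (word01 n) (word10 n)) x)
    (σ : Equiv.Perm (Fin n → Bool)) :
    ∃ w ∈ Subgroup.closure ({t, u} : Set (Equiv.Perm (ℕ → Bool))),
      ∀ᵐ x ∂μ, w x = dyadicMap n σ x := by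
  classical
  set G := Subgroup.closure ({t, u} : Set (Equiv.Perm (ℕ → Bool))) with hG
  have htG : t ∈ G := Subgroup.subset_closure (Set.mem_insert _ _)
  have huG : u ∈ G := Subgroup.subset_closure (Set.mem_insert_of_mem _ rfl)
  set N := 2 ^ n with hNdef
  have hNpos : 0 < N := Nat.two_pow_pos n
  have keyconj : ∀ a b : Fin n → Bool, a ≠ ones n → b ≠ ones n →
      ((Dp n (Equiv.swap a b) ∈ G) ↔
        (Dp n (Equiv.swap (wsucc n a) (wsucc n b)) ∈ G)) := by
    intro a b ha hb
    constructor
    · intro h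
      rw [← conj_perm t ht a b ha hb]
      exact G.mul_mem (G.mul_mem htG h) (G.inv_mem htG)
    · intro h
      have hc := conj_perm t ht a b ha hb
      have hrw : Dp n (Equiv.swap a b)
          = t⁻¹ * (t * Dp n (Equiv.swap a b) * t⁻¹) * t := by group
      rw [hrw, hc]
      exact G.mul_mem (G.mul_mem (G.inv_mem htG) h) htG
  have hw10 : word10 n ≠ ones n := w10_ne_ones (by omega)
  have hbase : Dp n (Equiv.swap (word10 n) (word01 n)) ∈ G := by
    have hud : u = Dp n (Equiv.swap (word01 n) (word10 n)) :=
      Equiv.ext fun x => by rw [hu]; rfl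
    rw [Equiv.swap_comm, ← hud]
    exact huG
  set k0 := val n (word10 n) with hk0def
  have hsw : wsucc n (word10 n) = word01 n := wsucc_w10 hn
  have hval01 : val n (word01 n) = k0 + 1 := by rw [← hsw, val_wsucc hw10]
  have hk01 : k0 + 1 < N := hval01 ▸ val_lt (word01 n)
  have hsk0 : sk n k0 = word10 n := sk_val (word10 n)
  have hsk1 : sk n (k0 + 1) = word01 n := by rw [← hval01]; exact sk_val (word01 n)
  -- upward chain of adjacent transpositions
  have up : ∀ j, k0 + j + 1 < N →
      Dp n (Equiv.swap (sk n (k0 + j)) (sk n (k0 + j + 1))) ∈ G := by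
    intro j
    induction j with
    | zero => intro _; simp only [Nat.add_zero]; rw [hsk0, hsk1]; exact hbase
    | succ j ih =>
      intro h
      have ha : sk n (k0 + j) ≠ ones n := sk_ne_ones (by omega) (by omega)
      have hb : sk n (k0 + j + 1) ≠ ones n := sk_ne_ones (by omega) (by omega)
      have hmem := (keyconj _ _ ha hb).mp (ih (by omega))
      rw [wsucc_sk (by omega), wsucc_sk (by omega)] at hmem
      exact hmem
  -- downward chain
  have down : ∀ j, j ≤ k0 →
      Dp n (Equiv.swap (sk n (k0 - j)) (sk n (k0 - j + 1))) ∈ G := by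
    intro j
    induction j with
    | zero => intro _; exact up 0 (by omega)
    | succ j ih =>
      intro hj
      have hm : k0 - (j + 1) + 1 = k0 - j := by omega
      have ha : sk n (k0 - (j + 1)) ≠ ones n := sk_ne_ones (by omega) (by omega)
      have hb : sk n (k0 - (j + 1) + 1) ≠ ones n := sk_ne_ones (by omega) (by omega)
      apply (keyconj _ _ ha hb).mpr
      rw [wsucc_sk (by omega), wsucc_sk (by omega), hm]
      exact ih (by omega)
  have adjacent : ∀ k, k + 1 < N →
      Dp n (Equiv.swap (sk n k) (sk n (k + 1))) ∈ G := by
    intro k hk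
    rcases le_or_gt k0 k with h | h
    · have := up (k - k0) (by omega)
      rw [show k0 + (k - k0) = k from by omega] at this
      exact this
    · have := down (k0 - k) (by omega)
      rw [show k0 - (k0 - k) = k from by omega] at this
      exact this
  have sk_injlt : ∀ k m, k < N → m < N → k ≠ m → sk n k ≠ sk n m := by
    intro k m hk hm hne heq
    exact hne (by rw [← val_sk (n := n) hk, ← val_sk (n := n) hm, heq])
  -- arbitrary transpositions of words with ordered values
  have swaps : ∀ d k, k + d + 1 < N →
      Dp n (Equiv.swap (sk n k) (sk n (k + d + 1))) ∈ G := by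
    intro d
    induction d with
    | zero => intro k h; exact adjacent k h
    | succ d ih =>
      intro k h
      have h1 : sk n (k + d + 2) ≠ sk n (k + 1) :=
        sk_injlt _ _ (by omega) (by omega) (by omega)
      have h2 : sk n (k + d + 2) ≠ sk n k :=
        sk_injlt _ _ (by omega) (by omega) (by omega)
      have key := Equiv.swap_mul_swap_mul_swap h1 h2
      have hgoal : Dp n (Equiv.swap (sk n k) (sk n (k + d + 2))) ∈ G := by
        rw [← key, map_mul, map_mul]
        have hA : Dp n (Equiv.swap (sk n (k + 1)) (sk n k)) ∈ G := by
          rw [Equiv.swap_comm]; exact adjacent k (by omega)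
        have hB : Dp n (Equiv.swap (sk n (k + d + 2)) (sk n (k + 1))) ∈ G := by
          have := ih (k + 1) (by omega)
          rw [show k + 1 + d + 1 = k + d + 2 from by omega] at this
          rw [Equiv.swap_comm]
          exact this
        exact G.mul_mem (G.mul_mem hA hB) hA
      exact hgoal
  have all_swaps : ∀ a b : Fin n → Bool, a ≠ b → Dp n (Equiv.swap a b) ∈ G := by
    have main : ∀ k m, k < m → m < N →
        Dp n (Equiv.swap (sk n k) (sk n m)) ∈ G := by
      intro k m hkm hm
      have := swaps (m - k - 1) k (by omega)
      rw [show k + (m - k - 1) + 1 = m from by omega] at this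
      exact this
    intro a b hab
    rcases lt_trichotomy (val n a) (val n b) with h | h | h
    · have := main (val n a) (val n b) h (val_lt b)
      rwa [sk_val, sk_val] at this
    · exact absurd (val_inj h) hab
    · have := main (val n b) (val n a) h (val_lt a)
      rw [sk_val, sk_val] at this
      rw [Equiv.swap_comm]
      exact this
  refine ⟨Dp n σ, ?_, MeasureTheory.ae_of_all μ fun x => rfl⟩
  have hle : Subgroup.closure {τ : Equiv.Perm (Fin n → Bool) | τ.IsSwap}
      ≤ G.comap (Dp n) := by
    rw [Subgroup.closure_le]
    rintro τ ⟨a, b, hab, rfl⟩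
    exact all_swaps a b hab
  have hσ : σ ∈ Subgroup.closure {τ : Equiv.Perm (Fin n → Bool) | τ.IsSwap} := by
    rw [Equiv.Perm.closure_isSwap]
    trivial
  exact Subgroup.mem_comap.mp (hle hσ)
end

section
/- Let (X,μ) be a standard probability space and let T, U be measure-preserving measurable bijections of X with disjoint supports, i.e. {x : T(x) ≠ x} ∩ {x : U(x) ≠ x} = ∅. Suppose there are two relatively prime integers p, q ≥ 2 such that for μ-a.e. x the T-orbit of x is finite with cardinality dividing a power of p, and for μ-a.e. x the U-orbit of x is finite with cardinality dividing a power of q. Then both T and U belong to the closure of the group generated by TU in the uniform topology: for every ε > 0 there exist n, m ∈ ℕ with μ({x : (TU)^n(x) ≠ T(x)}) < ε and μ({x : (TU)^m(x) ≠ U(x)}) < ε. -/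
open MeasureTheory
open scoped ENNReal

lemma perm_pow_fix {X : Type*} (g : Equiv.Perm X) (x : X) (h : g x = x) (k : ℕ) :
    (g ^ k) x = x := by
  rw [← Equiv.Perm.iterate_eq_pow]
  exact Function.iterate_fixed h k

lemma fix_or_fix {X : Type*} (T U : Equiv.Perm X)
    (h : {x : X | T x ≠ x} ∩ {x : X | U x ≠ x} = ∅) : ∀ x, T x = x ∨ U x = x := by
  intro x
  by_contra hc
  push_neg at hc
  exact Set.eq_empty_iff_forall_notMem.mp h x ⟨hc.1, hc.2⟩

lemma commute_of_disjoint_supports {X : Type*} (T U : Equiv.Perm X)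
    (h : {x : X | T x ≠ x} ∩ {x : X | U x ≠ x} = ∅) : Commute T U := by
  have h' := fix_or_fix T U h
  ext x
  show T (U x) = U (T x)
  rcases h' x with hT | hU
  · by_cases hU : U x = x
    · simp [hT, hU]
    · have hUx : U (U x) ≠ U x := fun hh => hU (U.injective hh)
      have : T (U x) = U x := (h' (U x)).resolve_right hUx
      rw [this, hT]
  · by_cases hT : T x = x
    · simp [hT, hU]
    · have hTx : T (T x) ≠ T x := fun hh => hT (T.injective hh)
      have : U (T x) = T x := (h' (T x)).resolve_left hTx
      rw [hU, this]

lemma perm_orbit_dvd_fix {X : Type*} (T : Equiv.Perm X) (x : X) (k : ℕ)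
    (hfin : {y : X | ∃ n : ℤ, (T ^ n) x = y}.Finite)
    (hdvd : {y : X | ∃ n : ℤ, (T ^ n) x = y}.ncard ∣ k) : (T ^ k) x = x := by
  have horb : {y : X | ∃ n : ℤ, (T ^ n) x = y} = MulAction.orbit (Subgroup.zpowers T) x := by
    ext y
    simp only [Set.mem_setOf_eq, MulAction.mem_orbit_iff]
    constructor
    · rintro ⟨n, rfl⟩
      exact ⟨⟨T ^ n, n, rfl⟩, rfl⟩
    · rintro ⟨⟨g, n, rfl⟩, rfl⟩
      exact ⟨n, rfl⟩
  rw [horb] at hfin hdvd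
  haveI := hfin.fintype
  rw [Set.ncard_eq_toFinset_card', Set.toFinset_card, ← MulAction.minimalPeriod_eq_card] at hdvd
  have h2 : (T : Equiv.Perm X) ^ k • x = x :=
    MulAction.pow_smul_eq_iff_minimalPeriod_dvd.mpr hdvd
  simpa [Equiv.Perm.smul_def] using h2

/-- If `T, U` are measure-preserving bijections with disjoint supports whose
orbits are a.e. finite with cardinalities dividing powers of two relatively prime integers
`p, q ≥ 2`, then `T` and `U` lie in the uniform closure of the cyclic group generated by
`T * U`. -/
theorem mem_closure_of_disjoint_supports_coprime_orbits
    {X : Type*} [MeasurableSpace X] [StandardBorelSpace X]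
    (μ : Measure X) [IsProbabilityMeasure μ]
    (T U : Equiv.Perm X)
    (hT1 : Measurable ⇑T) (hT2 : Measurable ⇑T.symm) (hTmp : MeasurePreserving ⇑T μ μ)
    (hU1 : Measurable ⇑U) (hU2 : Measurable ⇑U.symm) (hUmp : MeasurePreserving ⇑U μ μ)
    (hdisj : {x : X | T x ≠ x} ∩ {x : X | U x ≠ x} = ∅)
    (p q : ℕ) (hp : 2 ≤ p) (hq : 2 ≤ q) (hpq : Nat.Coprime p q)
    (hTorb : ∀ᵐ x ∂μ, ∃ j : ℕ, {y : X | ∃ n : ℤ, (T ^ n) x = y}.Finite ∧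
      {y : X | ∃ n : ℤ, (T ^ n) x = y}.ncard ∣ p ^ j)
    (hUorb : ∀ᵐ x ∂μ, ∃ j : ℕ, {y : X | ∃ n : ℤ, (U ^ n) x = y}.Finite ∧
      {y : X | ∃ n : ℤ, (U ^ n) x = y}.ncard ∣ q ^ j) :
    ∀ ε : ℝ≥0∞, 0 < ε →
      (∃ n : ℕ, μ {x : X | ((T * U) ^ n) x ≠ T x} < ε) ∧
      (∃ m : ℕ, μ {x : X | ((T * U) ^ m) x ≠ U x} < ε) := by
  intro ε hε
  letI := upgradeStandardBorel X
  have hcomm : Commute T U := commute_of_disjoint_supports T U hdisj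
  have h' := fix_or_fix T U hdisj
  have hmeas : ∀ (g : Equiv.Perm X), Measurable ⇑g → ∀ k : ℕ,
      MeasurableSet {x : X | (g ^ k) x ≠ x} := by
    intro g hg k
    have hgk : Measurable ⇑(g ^ k) := by
      rw [← Equiv.Perm.iterate_eq_pow]
      exact hg.iterate k
    exact (hgk.stronglyMeasurable.measurableSet_eq_fun
      measurable_id.stronglyMeasurable).compl
  set ET : ℕ → Set X := fun J => {x : X | (T ^ p ^ J) x ≠ x} with hETdef
  set EU : ℕ → Set X := fun J => {x : X | (U ^ q ^ J) x ≠ x} with hEUdef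
  have hanti : ∀ (g : Equiv.Perm X) (r : ℕ),
      Antitone (fun J => {x : X | (g ^ r ^ J) x ≠ x}) := by
    intro g r
    refine antitone_nat_of_succ_le fun J x hx => ?_
    simp only [Set.mem_setOf_eq] at hx ⊢
    intro hfix
    exact hx (by rw [pow_succ, pow_mul]; exact perm_pow_fix _ x hfix r)
  have hnull : ∀ (g : Equiv.Perm X) (r : ℕ),
      (∀ᵐ x ∂μ, ∃ j : ℕ, {y : X | ∃ n : ℤ, (g ^ n) x = y}.Finite ∧
        {y : X | ∃ n : ℤ, (g ^ n) x = y}.ncard ∣ r ^ j) →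
      μ (⋂ J, {x : X | (g ^ r ^ J) x ≠ x}) = 0 := by
    intro g r horb
    have h0 := ae_iff.mp horb
    refine measure_mono_null (fun x hx => ?_) h0
    simp only [Set.mem_iInter, Set.mem_setOf_eq] at hx ⊢
    rintro ⟨j, hfin, hdvd⟩
    exact hx j (perm_orbit_dvd_fix g x _ hfin hdvd)
  have hTt : Filter.Tendsto (μ ∘ ET) Filter.atTop (nhds 0) := by
    have := tendsto_measure_iInter_atTop (μ := μ)
      (fun J => (hmeas T hT1 (p ^ J)).nullMeasurableSet) (hanti T p)
      ⟨0, measure_ne_top μ _⟩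
    rwa [hnull T p hTorb] at this
  have hUt : Filter.Tendsto (μ ∘ EU) Filter.atTop (nhds 0) := by
    have := tendsto_measure_iInter_atTop (μ := μ)
      (fun J => (hmeas U hU1 (q ^ J)).nullMeasurableSet) (hanti U q)
      ⟨0, measure_ne_top μ _⟩
    rwa [hnull U q hUorb] at this
  have hhalf : (0 : ℝ≥0∞) < ε / 2 := ENNReal.half_pos hε.ne'
  obtain ⟨J, ⟨hTJ, hUJ⟩, hJ1⟩ :=
    (((hTt.eventually_lt_const hhalf).and (hUt.eventually_lt_const hhalf)).and
      (Filter.eventually_ge_atTop 1)).exists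
  have hpJ : 1 < p ^ J := Nat.one_lt_pow (by omega) (by omega)
  have hqJ : 1 < q ^ J := Nat.one_lt_pow (by omega) (by omega)
  have hcop : Nat.Coprime (p ^ J) (q ^ J) := Nat.Coprime.pow _ _ hpq
  have hmeasbound : ∀ S : Set X, S ⊆ ET J ∪ EU J → μ S < ε := by
    intro S hS
    calc μ S ≤ μ (ET J ∪ EU J) := measure_mono hS
      _ ≤ μ (ET J) + μ (EU J) := measure_union_le _ _
      _ < ε / 2 + ε / 2 := ENNReal.add_lt_add hTJ hUJ
      _ = ε := ENNReal.add_halves ε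
  constructor
  · -- n ≡ 1 mod p^J, n ≡ 0 mod q^J
    obtain ⟨n, hn1, hn0⟩ := Nat.chineseRemainder hcop 1 0
    refine ⟨n, hmeasbound _ fun x hx => ?_⟩
    by_contra hmem
    simp only [Set.mem_union, not_or] at hmem
    obtain ⟨hxT, hxU⟩ := hmem
    have hTfix : (T ^ p ^ J) x = x := not_not.mp hxT
    have hUfix : (U ^ q ^ J) x = x := not_not.mp hxU
    apply hx
    have hqdvd : q ^ J ∣ n := (Nat.modEq_zero_iff_dvd).mp hn0
    have hUn : (U ^ n) x = x := by
      obtain ⟨k, rfl⟩ := hqdvd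
      rw [pow_mul]; exact perm_pow_fix _ x hUfix k
    have hmod : n % p ^ J = 1 := by
      have := hn1
      unfold Nat.ModEq at this
      rwa [Nat.mod_eq_of_lt hpJ] at this
    have hdm := Nat.div_add_mod n (p ^ J)
    rw [hmod] at hdm
    rw [add_comm] at hdm
    have hneq : n = 1 + p ^ J * (n / p ^ J) := hdm.symm
    have hTn : (T ^ n) x = T x := by
      rw [hneq, pow_add, pow_one, pow_mul, Equiv.Perm.mul_apply,
        perm_pow_fix _ x hTfix _]
    calc ((T * U) ^ n) x = (T ^ n * U ^ n) x := by rw [hcomm.mul_pow]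
      _ = (T ^ n) ((U ^ n) x) := Equiv.Perm.mul_apply _ _ _
      _ = T x := by rw [hUn, hTn]
  · -- m ≡ 0 mod p^J, m ≡ 1 mod q^J
    obtain ⟨m, hm0, hm1⟩ := Nat.chineseRemainder hcop 0 1
    refine ⟨m, hmeasbound _ fun x hx => ?_⟩
    by_contra hmem
    simp only [Set.mem_union, not_or] at hmem
    obtain ⟨hxT, hxU⟩ := hmem
    have hTfix : (T ^ p ^ J) x = x := not_not.mp hxT
    have hUfix : (U ^ q ^ J) x = x := not_not.mp hxU
    apply hx
    have hpdvd : p ^ J ∣ m := (Nat.modEq_zero_iff_dvd).mp hm0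
    have hmod : m % q ^ J = 1 := by
      have := hm1
      unfold Nat.ModEq at this
      rwa [Nat.mod_eq_of_lt hqJ] at this
    have hdm := Nat.div_add_mod m (q ^ J)
    rw [hmod] at hdm
    rw [add_comm] at hdm
    have hmeq : m = 1 + q ^ J * (m / q ^ J) := hdm.symm
    have hUm : (U ^ m) x = U x := by
      rw [hmeq, pow_add, pow_one, pow_mul, Equiv.Perm.mul_apply,
        perm_pow_fix _ x hUfix _]
    have hTm : (T ^ m) (U x) = U x := by
      by_cases hUx : U x = x
      · rw [hUx]
        obtain ⟨k, rfl⟩ := hpdvd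
        rw [pow_mul]; exact perm_pow_fix _ x hTfix k
      · have hUUx : U (U x) ≠ U x := fun hh => hUx (U.injective hh)
        have hfix : T (U x) = U x := (h' (U x)).resolve_right hUUx
        exact perm_pow_fix _ _ hfix m
    calc ((T * U) ^ m) x = (T ^ m * U ^ m) x := by rw [hcomm.mul_pow]
      _ = (T ^ m) ((U ^ m) x) := Equiv.Perm.mul_apply _ _ _
      _ = U x := by rw [hUm, hTm]
end
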